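/- arXiv:2406.15745 — 15 statements merged into one kernel-verified Lean document; each statement's English description precedes it below -/
import Mathlib

section
/- Let R be a ring with proper involution and let m be a positive integer. An element a ∈ R has an m-weak group inverse if and only if a admits an m-weak group decomposition, i.e. there exist x, y ∈ R such that a = x + y, x^* a^(m-1) y = 0, y x = 0, x has a group inverse, and y is nilpotent. -/
/-- `z` is an `m`-weak group inverse of `a`. -/
def IsMWGI {R : Type*} [Ring R] [StarRing R] (m : ℕ) (a z : R) : Prop :=
  a * z ^ 2 = z ∧ ∃ k : ℕ, z * a ^ (k + 1) = a ^ k ∧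
    star (a ^ k) * a ^ (m + 1) * z = star (a ^ k) * a ^ m

/-- `w` is a weak group inverse of `b`. -/
def IsWGI {R : Type*} [Ring R] [StarRing R] (b w : R) : Prop :=
  b * w ^ 2 = w ∧ star (star b * b ^ 2 * w) = star b * b ^ 2 * w ∧
    ∃ k : ℕ, b ^ k = w * b ^ (k + 1)

/-- `x` is a group inverse of `u`. -/
def IsGroupInv {R : Type*} [Ring R] (u x : R) : Prop :=
  u * x ^ 2 = x ∧ u * x = x * u ∧ u = u ^ 2 * x

/-- `d` is a Drazin inverse of `a`. -/
def IsDrazin {R : Type*} [Ring R] (a d : R) : Prop :=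
  a * d ^ 2 = d ∧ a * d = d * a ∧ ∃ k : ℕ, a ^ k = d * a ^ (k + 1)

/-- `y` is a core-EP inverse of `a`. -/
def IsCoreEP {R : Type*} [Ring R] [StarRing R] (a y : R) : Prop :=
  a * y ^ 2 = y ∧ star (a * y) = a * y ∧ ∃ k : ℕ, a ^ k = y * a ^ (k + 1)

theorem mwgi_iff_decomposition {R : Type*} [Ring R] [StarRing R]
    (hproper : ∀ x : R, star x * x = 0 → x = 0)
    (m : ℕ) (hm : 0 < m) (a : R) :
    (∃ z : R, IsMWGI m a z) ↔
      ∃ x y : R, a = x + y ∧ star x * a ^ (m - 1) * y = 0 ∧ y * x = 0 ∧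
        (∃ g : R, IsGroupInv x g) ∧ IsNilpotent y := by
  obtain ⟨m', rfl⟩ : ∃ m', m = m' + 1 := ⟨m - 1, by omega⟩
  simp only [IsMWGI, IsGroupInv, Nat.add_sub_cancel]
  constructor
  · rintro ⟨z, haz, k, hk, hst⟩
    -- powers of z swallow powers of a
    have hpow : ∀ n : ℕ, a ^ n * z ^ (n + 1) = z := by
      intro n
      induction n with
      | zero => simp
      | succ n ih =>
        have h1 : a ^ (n+1) * z ^ (n+2) = a ^ n * (a * z ^ 2) * z ^ n := by
          rw [pow_succ a n, pow_succ' z (n+1), pow_succ' z n, sq]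
          simp only [mul_assoc]
        rw [h1, haz, mul_assoc, ← pow_succ' z n, ih]
    -- hk lifts to any larger exponent
    have hkj : ∀ j : ℕ, z * a ^ (k + 1 + j) = a ^ (k + j) := by
      intro j
      induction j with
      | zero => simpa using hk
      | succ j ih =>
        have h1 : k + 1 + (j + 1) = (k + 1 + j) + 1 := by omega
        rw [h1, pow_succ, ← mul_assoc, ih, ← pow_succ, Nat.add_assoc]
    -- hst lifts to any larger exponent
    have hstj : ∀ j : ℕ,
        star (a ^ (k + j)) * a ^ (m' + 1 + 1) * z = star (a ^ (k + j)) * a ^ (m' + 1) := by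
      intro j
      have h1 : a ^ (k + j) = a ^ k * a ^ j := pow_add a k j
      rw [h1, star_mul]
      simpa only [mul_assoc] using congrArg (star (a ^ j) * ·) hst
    have za2z : z * a ^ 2 * z = a * z := by
      calc z * a ^ 2 * z = z * a ^ 2 * (a ^ k * z ^ (k+1)) := by rw [hpow k]
        _ = z * a ^ (k + 1 + 1) * z ^ (k+1) := by
            rw [show a ^ (k+1+1) = a ^ 2 * a ^ k by rw [← pow_add]; ring_nf]
            simp only [mul_assoc]
        _ = a ^ (k+1) * z ^ (k+1) := by rw [hkj 1]
        _ = a * (a ^ k * z ^ (k+1)) := by rw [pow_succ' a k, mul_assoc]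
        _ = a * z := by rw [hpow k]
    refine ⟨a ^ 2 * z, a - a ^ 2 * z, by abel, ?_, ?_, ⟨z, ?_, ?_, ?_⟩, ⟨k + 2, ?_⟩⟩
    · -- star x * a^m' * y = 0
      have hx : a ^ 2 * z = a ^ (k + 2) * z ^ (k + 1) := by
        conv_lhs => rw [← hpow k]
        rw [show a ^ (k+2) = a ^ 2 * a ^ k by rw [← pow_add]; ring_nf, mul_assoc]
      have key : star (a ^ 2 * z) * a ^ (m' + 1 + 1) * z = star (a ^ 2 * z) * a ^ (m' + 1) := by
        rw [hx, star_mul]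
        simpa only [mul_assoc] using congrArg (star (z ^ (k+1)) * ·) (hstj 2)
      have e1 : star (a ^ 2 * z) * a ^ m' * (a ^ 2 * z)
          = star (a ^ 2 * z) * a ^ (m' + 1 + 1) * z := by
        rw [show a ^ (m' + 1 + 1) = a ^ m' * a ^ 2 by rw [← pow_add]]
        simp only [mul_assoc]
      have e2 : star (a ^ 2 * z) * a ^ m' * a = star (a ^ 2 * z) * a ^ (m' + 1) := by
        rw [pow_succ a m', ← mul_assoc]
      calc star (a ^ 2 * z) * a ^ m' * (a - a ^ 2 * z)
          = star (a ^ 2 * z) * a ^ m' * a - star (a ^ 2 * z) * a ^ m' * (a ^ 2 * z) := by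
            rw [mul_sub]
        _ = star (a ^ 2 * z) * a ^ (m' + 1) - star (a ^ 2 * z) * a ^ (m' + 1) := by
            rw [e1, key, e2]
        _ = 0 := sub_self _
    · -- y * x = 0
      have h1 : (a - a ^ 2 * z) * (a ^ 2 * z) = a ^ 3 * z - a ^ 2 * (z * a ^ 2 * z) := by
        noncomm_ring
      rw [h1, za2z]
      noncomm_ring
    · -- x * z^2 = z
      calc a ^ 2 * z * z ^ 2 = a * (a * z ^ 2) * z := by noncomm_ring
        _ = a * z * z := by rw [haz]
        _ = a * z ^ 2 := by noncomm_ring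
        _ = z := haz
    · -- x * z = z * x
      have h1 : a ^ 2 * z * z = a * (a * z ^ 2) := by noncomm_ring
      have h2 : z * (a ^ 2 * z) = z * a ^ 2 * z := by rw [mul_assoc]
      rw [h1, haz, h2, za2z]
    · -- x = x^2 * z
      have h1 : (a ^ 2 * z) ^ 2 * z = a ^ 2 * (z * a ^ 2 * z) * z := by noncomm_ring
      have h2 : a ^ 2 * (a * z) * z = a ^ 2 * (a * z ^ 2) := by noncomm_ring
      rw [h1, za2z, h2, haz]
    · -- nilpotency: (a - a^2*z)^(k+2) = 0
      have he : a - a ^ 2 * z = a * (1 - a * z) := by noncomm_ring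
      have heae : (1 - a*z) * a * (1 - a*z) = (1 - a*z) * a := by
        have h1 : (1 - a*z) * a * (1 - a*z)
            = (1 - a*z) * a - a ^ 2 * z + a * (z * a ^ 2 * z) := by noncomm_ring
        rw [h1, za2z]
        noncomm_ring
      have hq : ∀ n : ℕ, ((1 - a*z) * a) ^ (n+1) = (1 - a*z) * a ^ (n+1) := by
        intro n
        induction n with
        | zero => simp
        | succ n ih =>
          rw [pow_succ' ((1 - a*z) * a) (n+1), ih, ← mul_assoc, heae, mul_assoc, ← pow_succ']
      have hea0 : (1 - a*z) * a ^ (k+1) = 0 := by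
        rw [sub_mul, one_mul, mul_assoc, hk, ← pow_succ', sub_self]
      have hae : ∀ n : ℕ, (a * (1 - a*z)) ^ (n+1) = a * ((1 - a*z) * a) ^ n * (1 - a*z) := by
        intro n
        induction n with
        | zero => simp
        | succ n ih =>
          rw [pow_succ' (a * (1 - a*z)) (n+1), ih, pow_succ' ((1 - a*z) * a) n]
          simp only [mul_assoc]
      rw [he, hae (k+1), hq k, hea0, mul_zero, zero_mul]
  · rintro ⟨x, y, rfl, hst0, hyx, ⟨g, hg1, hg2, hg3⟩, n, hn⟩
    have hyg : y * g = 0 := by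
      rw [← hg1, ← mul_assoc, hyx, zero_mul]
    have hgxx : g * x * x = x := by
      rw [← hg2, mul_assoc, ← hg2, ← mul_assoc, ← sq, ← hg3]
    have hxxg : x * x * g = x := by rw [← sq, ← hg3]
    have hS : ∀ K : ℕ, (x+y) ^ (K+1) = x * (x+y) ^ K + y ^ (K+1) := by
      intro K
      induction K with
      | zero => simp
      | succ K ih =>
        rw [pow_succ (x+y) (K+1)]
        conv_lhs => rw [ih]
        rw [add_mul, mul_add (y ^ (K+1)),
          show y ^ (K+1) * x = y ^ K * (y * x) by rw [pow_succ, mul_assoc],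
          hyx, mul_zero, zero_add, ← pow_succ y (K+1), mul_assoc, ← pow_succ (x+y) K]
    have hA1 : (x+y) ^ (n+1) = x * (x+y) ^ n := by
      rw [hS n, pow_succ y n, hn, zero_mul, add_zero]
    have hA2 : (x+y) ^ (n+2) = x * (x+y) ^ (n+1) := by
      rw [hS (n+1), pow_succ y (n+1), pow_succ y n, hn, zero_mul, zero_mul, add_zero]
    refine ⟨g, ?_, n + 1, ?_, ?_⟩
    · rw [add_mul, hg1, sq, ← mul_assoc, hyg, zero_mul, add_zero]
    · -- g * (x+y)^(n+2) = (x+y)^(n+1)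
      calc g * (x+y) ^ (n+1+1) = g * (x * (x * (x+y) ^ n)) := by rw [hA2, hA1]
        _ = g * x * x * (x+y) ^ n := by simp only [mul_assoc]
        _ = x * (x+y) ^ n := by rw [hgxx]
        _ = (x+y) ^ (n+1) := (hA1).symm
    · -- star condition with k = n+1
      have hag : (x+y) * g = x * g := by rw [add_mul, hyg, add_zero]
      have stepA : (x+y) ^ (m'+1+1) * g = (x+y) ^ m' * x := by
        calc (x+y) ^ (m'+1+1) * g = (x+y) ^ (m'+1) * ((x+y) * g) := by
              rw [pow_succ, mul_assoc]
          _ = (x+y) ^ m' * ((x+y) * (x * g)) := by rw [hag, pow_succ, mul_assoc]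
          _ = (x+y) ^ m' * (x * (x * g) + y * (x * g)) := by rw [add_mul]
          _ = (x+y) ^ m' * x := by
              rw [← mul_assoc y x g, hyx, zero_mul, add_zero, ← mul_assoc x x g, hxxg]
      have hz : star ((x+y) ^ (n+1)) * ((x+y) ^ m' * y) = 0 := by
        calc star ((x+y) ^ (n+1)) * ((x+y) ^ m' * y)
            = star ((x+y) ^ n) * (star x * (x+y) ^ m' * y) := by
              rw [hA1, star_mul]
              simp only [mul_assoc]
          _ = 0 := by rw [hst0, mul_zero]
      calc star ((x+y) ^ (n+1)) * (x+y) ^ (m'+1+1) * g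
          = star ((x+y) ^ (n+1)) * ((x+y) ^ (m'+1+1) * g) := by rw [mul_assoc]
        _ = star ((x+y) ^ (n+1)) * ((x+y) ^ m' * x) := by rw [stepA]
        _ = star ((x+y) ^ (n+1)) * ((x+y) ^ m' * x)
              + star ((x+y) ^ (n+1)) * ((x+y) ^ m' * y) := by rw [hz, add_zero]
        _ = star ((x+y) ^ (n+1)) * (x+y) ^ (m'+1) := by
              rw [pow_succ (x+y) m', mul_add ((x+y) ^ m'), mul_add]
end

section
/- Let R be a ring with proper involution and let m be a positive integer. An element a ∈ R has an m-weak group inverse if and only if a has a Drazin inverse d and there exist x ∈ R and n ∈ ℕ such that x = a x^2, d^* a^(m+1) x = d^* a^m, and a^n = x a^(n+1). -/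
private lemma aux_la {R : Type*} [Ring R] {a z : R} (h : a * z ^ 2 = z) :
    ∀ j : ℕ, a ^ j * z ^ (j + 1) = z := by
  intro j
  induction j with
  | zero => simp
  | succ j ih =>
    calc a ^ (j + 1) * z ^ (j + 2)
        = (a ^ j * a) * (z ^ 2 * z ^ j) := by
          rw [pow_succ]
          congr 1
          rw [show j + 2 = 2 + j by omega, pow_add]
      _ = a ^ j * ((a * z ^ 2) * z ^ j) := by
          rw [mul_assoc, ← mul_assoc a]
      _ = a ^ j * (z * z ^ j) := by rw [h]
      _ = a ^ j * z ^ (j + 1) := by rw [← pow_succ']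
      _ = z := ih

private lemma aux_lb {R : Type*} [Ring R] {a z : R} {k : ℕ}
    (h : z * a ^ (k + 1) = a ^ k) :
    ∀ j : ℕ, z ^ j * a ^ (k + j) = a ^ k := by
  intro j
  induction j with
  | zero => simp
  | succ j ih =>
    calc z ^ (j + 1) * a ^ (k + (j + 1))
        = (z ^ j * z) * (a ^ (k + 1) * a ^ j) := by
          rw [pow_succ]
          congr 1
          rw [show k + (j + 1) = (k + 1) + j by omega, pow_add]
      _ = z ^ j * ((z * a ^ (k + 1)) * a ^ j) := by
          rw [mul_assoc, ← mul_assoc z]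
      _ = z ^ j * (a ^ k * a ^ j) := by rw [h]
      _ = z ^ j * a ^ (k + j) := by rw [← pow_add]
      _ = a ^ k := ih

private lemma aux_lc {R : Type*} [Ring R] {a x : R} {n : ℕ}
    (h : x * a ^ (n + 1) = a ^ n) :
    ∀ j : ℕ, x * a ^ (n + j + 1) = a ^ (n + j) := by
  intro j
  induction j with
  | zero => exact h
  | succ j ih =>
    rw [show n + (j + 1) + 1 = (n + j + 1) + 1 by omega, pow_succ, ← mul_assoc, ih,
      ← pow_succ, show n + j + 1 = n + (j + 1) by omega]

private lemma aux_ld {R : Type*} [Ring R] {a d : R} {k : ℕ}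
    (h : ∀ j : ℕ, a ^ (k + j) = d * a ^ (k + j + 1)) :
    ∀ i j : ℕ, a ^ (k + j) = d ^ i * a ^ (k + j + i) := by
  intro i
  induction i with
  | zero => intro j; simp
  | succ i ih =>
    intro j
    calc a ^ (k + j) = d ^ i * a ^ (k + j + i) := ih j
      _ = d ^ i * a ^ (k + (j + i)) := by rw [show k + j + i = k + (j + i) by omega]
      _ = d ^ i * (d * a ^ (k + (j + i) + 1)) := by rw [← h (j + i)]
      _ = (d ^ i * d) * a ^ (k + (j + i) + 1) := by rw [mul_assoc]
      _ = d ^ (i + 1) * a ^ (k + j + (i + 1)) := by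
          rw [← pow_succ, show k + (j + i) + 1 = k + j + (i + 1) by omega]

theorem mwgi_iff_drazin_cond {R : Type*} [Ring R] [StarRing R]
    (hproper : ∀ x : R, star x * x = 0 → x = 0)
    (m : ℕ) (hm : 0 < m) (a : R) :
    (∃ z : R, IsMWGI m a z) ↔
      ∃ d : R, IsDrazin a d ∧ ∃ x : R, ∃ n : ℕ,
        x = a * x ^ 2 ∧ star d * a ^ (m + 1) * x = star d * a ^ m ∧
        a ^ n = x * a ^ (n + 1) := by
  constructor
  · rintro ⟨z, hz1, k, hz2, hz3⟩
    have hA := aux_la hz1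
    have hz2' : z * a ^ (k + 1 + 1) = a ^ (k + 1) := by
      rw [pow_succ, ← mul_assoc, hz2, ← pow_succ]
    have hB := aux_lb hz2'
    set d := z ^ (k + 2) * a ^ (k + 1) with hd
    have haz : a * z ^ (k + 2) = z ^ (k + 1) := by
      calc a * z ^ (k + 2) = a * (z ^ 2 * z ^ k) := by
            rw [show k + 2 = 2 + k by omega, pow_add]
        _ = (a * z ^ 2) * z ^ k := by rw [mul_assoc]
        _ = z * z ^ k := by rw [hz1]
        _ = z ^ (k + 1) := by rw [← pow_succ']
    have had : a * d = z ^ (k + 1) * a ^ (k + 1) := by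
      rw [hd, ← mul_assoc, haz]
    have hda : d * a = z ^ (k + 1) * a ^ (k + 1) := by
      calc d * a = z ^ (k + 2) * (a ^ (k + 1) * a) := by rw [hd, mul_assoc]
        _ = (z ^ (k + 1) * z) * a ^ (k + 1 + 1) := by rw [← pow_succ, ← pow_succ]
        _ = z ^ (k + 1) * (z * a ^ (k + 1 + 1)) := by rw [mul_assoc]
        _ = z ^ (k + 1) * a ^ (k + 1) := by rw [hz2']
    have hd2 : a * d ^ 2 = d := by
      calc a * d ^ 2 = (a * d) * d := by rw [sq, ← mul_assoc]
        _ = (z ^ (k + 1) * a ^ (k + 1)) * (z ^ (k + 2) * a ^ (k + 1)) := by rw [had, hd]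
        _ = z ^ (k + 1) * ((a ^ (k + 1) * z ^ (k + 1 + 1)) * a ^ (k + 1)) := by
            rw [mul_assoc, ← mul_assoc (a ^ (k+1))]
        _ = z ^ (k + 1) * (z * a ^ (k + 1)) := by rw [hA (k + 1)]
        _ = (z ^ (k + 1) * z) * a ^ (k + 1) := by rw [← mul_assoc]
        _ = d := by rw [← pow_succ, hd]
    have hdk : a ^ (k + 1) = d * a ^ (k + 1 + 1) := by
      have := hB (k + 2)
      calc a ^ (k + 1) = z ^ (k + 2) * a ^ (k + 1 + (k + 2)) := (hB (k + 2)).symm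
        _ = z ^ (k + 2) * (a ^ (k + 1) * a ^ (k + 2)) := by rw [← pow_add]
        _ = d * a ^ (k + 1 + 1) := by rw [← mul_assoc, hd]
    refine ⟨d, ⟨hd2, had.trans hda.symm, k + 1, hdk⟩, z, k + 1, hz1.symm, ?_, hz2'.symm⟩
    have hdd := aux_la hd2
    have hstar : star d = (star d) ^ (k + 1) * star (a ^ k) := by
      conv_lhs => rw [← hdd k]
      rw [star_mul, star_pow]
    simp only [mul_assoc] at hz3 ⊢
    rw [hstar]
    simp only [mul_assoc]
    rw [hz3]
  · rintro ⟨d, ⟨hd1, hd2, k, hd3⟩, x, n, hx1, hx2, hx3⟩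
    have hx3' : x * a ^ (n + 1) = a ^ n := hx3.symm
    have hlc := aux_lc hx3'
    refine ⟨x, hx1.symm, n + k + 1, ?_, ?_⟩
    · have := hlc (k + 1)
      rwa [show n + (k + 1) = n + k + 1 by omega] at this
    · have hstep : ∀ j : ℕ, a ^ (k + j) = d * a ^ (k + j + 1) := by
        intro j
        calc a ^ (k + j) = a ^ k * a ^ j := by rw [pow_add]
          _ = (d * a ^ (k + 1)) * a ^ j := by rw [hd3]
          _ = d * (a ^ (k + 1) * a ^ j) := by rw [mul_assoc]
          _ = d * a ^ (k + j + 1) := by rw [← pow_add, show k + 1 + j = k + j + 1 by omega]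
      have hld := aux_ld hstep
      have hKpow : a ^ (n + k + 1) = d ^ (n + k + 1) * a ^ ((n + k + 1) + (n + k + 1)) := by
        have := hld (n + k + 1) (n + 1)
        rwa [show k + (n + 1) = n + k + 1 by omega] at this
      have hstar : star (a ^ (n + k + 1)) =
          star (a ^ ((n + k + 1) + (n + k + 1))) * ((star d) ^ (n + k) * star d) := by
        have h1 : (star d : R) ^ (n + k) * star d = star (d ^ (n + k + 1)) := by
          rw [star_pow, pow_succ]
        rw [h1, ← star_mul, ← hKpow]
      simp only [mul_assoc] at hx2 ⊢
      rw [hstar]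
      simp only [mul_assoc]
      rw [hx2]
end

section
/- Let R be a ring with proper involution, m a positive integer, and let x be an m-weak group inverse of a ∈ R. Then (1) x = x a x; (2) a x = x a^2 x; and (3) a x = a^j x^j for every positive integer j. -/
theorem mwgi_basic_identities {R : Type*} [Ring R] [StarRing R]
    (hproper : ∀ x : R, star x * x = 0 → x = 0)
    (m : ℕ) (hm : 0 < m) (a x : R) (hx : IsMWGI m a x) :
    x = x * a * x ∧ a * x = x * a ^ 2 * x ∧
      ∀ j : ℕ, 0 < j → a * x = a ^ j * x ^ j := by
  obtain ⟨h1, k, h2, -⟩ := hx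
  have hL : ∀ n : ℕ, x = a ^ n * x ^ (n + 1) := by
    intro n
    induction n with
    | zero => simp
    | succ n ih =>
      have e1 : x ^ (n + 2) = x ^ 2 * x ^ n := by
        rw [← pow_add]; congr 1; omega
      have e2 : a ^ (n + 1) * x ^ (n + 2) = a ^ n * (a * x ^ 2 * x ^ n) := by
        rw [e1, pow_succ]; noncomm_ring
      rw [e2, h1, ← pow_succ']
      exact ih
  have h3 : ∀ j : ℕ, 0 < j → a * x = a ^ j * x ^ j := by
    intro j hj
    induction j with
    | zero => omega
    | succ j ih =>
      rcases Nat.eq_zero_or_pos j with hj0 | hj0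
      · subst hj0; simp
      · obtain ⟨i, rfl⟩ : ∃ i, j = i + 1 := ⟨j - 1, by omega⟩
        have e1 : x ^ (i + 1 + 1) = x ^ 2 * x ^ i := by
          rw [← pow_add]; congr 1; omega
        have e2 : a ^ (i + 1 + 1) * x ^ (i + 1 + 1) = a ^ (i + 1) * (a * x ^ 2 * x ^ i) := by
          rw [e1, pow_succ]; noncomm_ring
        rw [e2, h1, ← pow_succ']
        exact ih hj0
  refine ⟨?_, ?_, h3⟩
  · have : x * a * x = x := by
      calc x * a * x = x * a * (a ^ k * x ^ (k + 1)) := by rw [← hL k]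
        _ = x * a ^ (k + 1) * x ^ (k + 1) := by rw [pow_succ' a k]; noncomm_ring
        _ = a ^ k * x ^ (k + 1) := by rw [h2]
        _ = x := (hL k).symm
    exact this.symm
  · have e0 : a ^ 2 * a ^ k = a ^ (k + 1) * a := by
      rw [← pow_add, ← pow_succ]; congr 1; omega
    have : x * a ^ 2 * x = a * x := by
      calc x * a ^ 2 * x = x * a ^ 2 * (a ^ k * x ^ (k + 1)) := by rw [← hL k]
        _ = x * (a ^ 2 * a ^ k) * x ^ (k + 1) := by noncomm_ring
        _ = x * (a ^ (k + 1) * a) * x ^ (k + 1) := by rw [e0]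
        _ = x * a ^ (k + 1) * (a * x ^ (k + 1)) := by noncomm_ring
        _ = a ^ k * (a * x ^ (k + 1)) := by rw [h2]
        _ = a ^ (k + 1) * x ^ (k + 1) := by rw [pow_succ a k]; noncomm_ring
        _ = a * x := (h3 (k + 1) (Nat.succ_pos k)).symm
    exact this.symm
end

section
/- Let R be a ring with proper involution, m a positive integer, and let x be an m-weak group inverse of a ∈ R. Then a^2 x is an m-weak group inverse of x; that is, (a^{W_m})^{W_m} = a^2 a^{W_m}. -/
theorem mwgi_of_mwgi {R : Type*} [Ring R] [StarRing R]
    (hproper : ∀ x : R, star x * x = 0 → x = 0)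
    (m : ℕ) (hm : 0 < m) (a x : R) (hx : IsMWGI m a x) :
    IsMWGI m x (a ^ 2 * x) := by
  obtain ⟨h1, k, h2, _⟩ := hx
  have h1' : a * (x * x) = x := by rw [← pow_two]; exact h1
  have H1 : ∀ y : R, a * (x * (x * y)) = x * y := by
    intro y
    rw [← mul_assoc, ← mul_assoc, mul_assoc a x x, h1']
  have H2 : ∀ y : R, x * (a * (a ^ k * y)) = a ^ k * y := by
    intro y
    rw [← mul_assoc, ← mul_assoc, mul_assoc x a (a ^ k), ← pow_succ', h2]
  have comm : ∀ y : R, a * (a ^ k * y) = a ^ k * (a * y) := by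
    intro y
    rw [← mul_assoc, ← pow_succ', pow_succ, mul_assoc]
  have hxn : ∀ n : ℕ, a ^ n * x ^ (n + 1) = x := by
    intro n
    induction n with
    | zero => simp
    | succ n ih =>
      rw [pow_succ' x (n + 1), pow_succ' x n, pow_succ a n, mul_assoc, H1 (x ^ n),
        ← pow_succ']
      exact ih
  have hxax : x * (a * x) = x := by
    calc x * (a * x) = x * (a * (a ^ k * x ^ (k + 1))) := by rw [hxn k]
      _ = a ^ k * x ^ (k + 1) := H2 _
      _ = x := hxn k
  have hxa2x : x * (a ^ 2 * x) = a * x := by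
    calc x * (a ^ 2 * x) = x * (a * (a * x)) := by rw [pow_two a, mul_assoc]
      _ = x * (a * (a * (a ^ k * x ^ (k + 1)))) := by rw [hxn k]
      _ = x * (a * (a ^ k * (a * x ^ (k + 1)))) := by rw [comm]
      _ = a ^ k * (a * x ^ (k + 1)) := H2 _
      _ = a * (a ^ k * x ^ (k + 1)) := (comm _).symm
      _ = a * x := by rw [hxn k]
  refine ⟨?_, 1, ?_, ?_⟩
  · rw [pow_two (a ^ 2 * x), ← mul_assoc, hxa2x, mul_assoc, hxa2x, ← mul_assoc,
      ← pow_two a]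
  · have e : x ^ (1 + 1) = x * x := by rw [pow_two]
    rw [pow_one, e, pow_two a, mul_assoc, mul_assoc, H1 x, h1']
  · obtain ⟨m', rfl⟩ : ∃ m', m = m' + 1 := ⟨m - 1, (Nat.succ_pred_eq_of_pos hm).symm⟩
    have key : x ^ (m' + 1 + 1) * (a ^ 2 * x) = x ^ (m' + 1) := by
      rw [pow_succ x (m' + 1), mul_assoc, hxa2x, pow_succ x m', mul_assoc, hxax,
        ← pow_succ]
    rw [mul_assoc, key]
end

section
/- Let R be a ring with proper involution, m a positive integer, and let x be an m-weak group inverse of a ∈ R. Then x is an m-weak group inverse of a^2 x; that is, applying the m-weak group inverse operation three times to a returns a^{W_m}: ((a^{W_m})^{W_m})^{W_m} = a^{W_m}. -/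
theorem mwgi_triple {R : Type*} [Ring R] [StarRing R]
    (hproper : ∀ x : R, star x * x = 0 → x = 0)
    (m : ℕ) (hm : 0 < m) (a x : R) (hx : IsMWGI m a x) :
    IsMWGI m (a ^ 2 * x) x := by
  obtain ⟨h1, k, h2, h3⟩ := hx
  have hA : ∀ n : ℕ, a ^ n * x ^ (n + 1) = x := by
    intro n
    induction n with
    | zero => simp
    | succ n ih =>
      calc a ^ (n + 1) * x ^ (n + 2)
          = a ^ n * ((a * x ^ 2) * x ^ n) := by
            rw [pow_succ a n, show n + 2 = 2 + n from Nat.add_comm n 2, pow_add x 2 n]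
            simp only [mul_assoc]
        _ = a ^ n * (x * x ^ n) := by rw [h1]
        _ = a ^ n * x ^ (n + 1) := by rw [← pow_succ']
        _ = x := ih
  have hC : ∀ n : ℕ, a ^ (n + 1) * x ^ (n + 1) = a * x := by
    intro n
    induction n with
    | zero => simp
    | succ n ih =>
      calc a ^ (n + 2) * x ^ (n + 2)
          = a ^ (n + 1) * ((a * x ^ 2) * x ^ n) := by
            rw [pow_succ a (n + 1), show n + 2 = 2 + n from Nat.add_comm n 2,
              pow_add x 2 n]
            simp only [mul_assoc]
        _ = a ^ (n + 1) * (x * x ^ n) := by rw [h1]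
        _ = a ^ (n + 1) * x ^ (n + 1) := by rw [← pow_succ']
        _ = a * x := ih
  have hB : x * a ^ (k + 2) = a ^ (k + 1) := by
    have h : x * a ^ (k + 2) = x * a ^ (k + 1) * a := by
      rw [pow_succ a (k + 1), ← mul_assoc]
    rw [h, h2, ← pow_succ]
  have hXa2x : x * a ^ 2 * x = a * x := by
    have e : a ^ (k + 2) = a ^ 2 * a ^ k := by
      rw [show k + 2 = 2 + k from Nat.add_comm k 2, pow_add]
    calc x * a ^ 2 * x = x * a ^ 2 * (a ^ k * x ^ (k + 1)) := by rw [hA]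
      _ = x * a ^ (k + 2) * x ^ (k + 1) := by rw [e]; simp only [mul_assoc]
      _ = a ^ (k + 1) * x ^ (k + 1) := by rw [hB]
      _ = a * x := hC k
  have bpow : ∀ n : ℕ, (a ^ 2 * x) ^ (n + 1) = a ^ (n + 2) * x := by
    intro n
    induction n with
    | zero => simp
    | succ n ih =>
      calc (a ^ 2 * x) ^ (n + 2) = (a ^ 2 * x) ^ (n + 1) * (a ^ 2 * x) := by
            rw [pow_succ]
        _ = a ^ (n + 2) * x * (a ^ 2 * x) := by rw [ih]
        _ = a ^ (n + 2) * (x * a ^ 2 * x) := by simp only [mul_assoc]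
        _ = a ^ (n + 2) * (a * x) := by rw [hXa2x]
        _ = a ^ (n + 3) * x := by rw [pow_succ a (n + 2), mul_assoc]
  refine ⟨?_, k + 1, ?_, ?_⟩
  · have h : a ^ 2 * x * x ^ 2 = a * ((a * x ^ 2) * x) := by
      rw [sq a, sq x]; simp only [mul_assoc]
    rw [h, h1, show a * (x * x) = a * x ^ 2 from by rw [sq], h1]
  · rw [bpow, bpow]
    have e : a ^ (k + 3) = a ^ (k + 1) * a ^ 2 := by
      rw [← pow_add]
    calc x * (a ^ (k + 3) * x) = x * a ^ (k + 1) * (a ^ 2 * x) := by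
          rw [e]; simp only [mul_assoc]
      _ = a ^ k * (a ^ 2 * x) := by rw [h2]
      _ = a ^ (k + 2) * x := by
          rw [show k + 2 = k + 2 from rfl, ← mul_assoc, ← pow_add,
            Nat.add_comm k 2]
  · obtain ⟨m', rfl⟩ : ∃ m', m = m' + 1 := ⟨m - 1, by omega⟩
    rw [bpow, bpow, bpow, show m' + 1 + 2 = m' + 3 from by omega]
    have key : a ^ (m' + 3) * x * x = a ^ (m' + 2) * x := by
      calc a ^ (m' + 3) * x * x = a ^ (m' + 2) * (a * x ^ 2) := by
            rw [pow_succ a (m' + 2), sq]; simp only [mul_assoc]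
        _ = a ^ (m' + 2) * x := by rw [h1]
    rw [mul_assoc, key]
end

section
/- Let R be a ring with proper involution, m a positive integer, and let x be an m-weak group inverse of a ∈ R. Then x has a weak group inverse, and a^2 x is a weak group inverse of x; that is, (a^{W_m})^{W} = a^2 a^{W_m}. -/
theorem mwgi_has_wgi {R : Type*} [Ring R] [StarRing R]
    (hproper : ∀ x : R, star x * x = 0 → x = 0)
    (m : ℕ) (hm : 0 < m) (a x : R) (hx : IsMWGI m a x) :
    IsWGI x (a ^ 2 * x) := by
  obtain ⟨h1, k, h2, -⟩ := hx
  -- a^(n+1) * x^(n+1) = a * x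
  have hA : ∀ n : ℕ, a ^ (n + 1) * x ^ (n + 1) = a * x := by
    intro n
    induction n with
    | zero => simp
    | succ n ih =>
      have e : a ^ (n + 2) * x ^ (n + 2) = a ^ (n + 1) * (a * x ^ 2) * x ^ n := by
        rw [pow_succ a (n + 1), show n + 2 = 2 + n by omega, pow_add x 2 n]
        noncomm_ring
      rw [e, h1, mul_assoc, ← pow_succ', ih]
  -- x * a^2 * x = x * a^(n+2) * x^(n+1)
  have hB : ∀ n : ℕ, x * a ^ 2 * x = x * a ^ (n + 2) * x ^ (n + 1) := by
    intro n
    induction n with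
    | zero => simp
    | succ n ih =>
      rw [ih]
      have e : x ^ (n + 1) = a * x ^ (n + 2) := by
        rw [show n + 2 = 2 + n by omega, pow_add x 2 n, ← mul_assoc, h1, ← pow_succ']
      rw [e, show x * a ^ (n + 2) * (a * x ^ (n + 2)) =
        x * (a ^ (n + 2) * a) * x ^ (n + 2) by noncomm_ring, ← pow_succ]
  have hkey : x * a ^ 2 * x = a * x := by
    cases k with
    | zero =>
      simp only [zero_add, pow_one, pow_zero] at h2
      rw [show x * a ^ 2 * x = (x * a) * (a * x) by noncomm_ring, h2, one_mul]
    | succ j =>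
      rw [hB j, show x * a ^ (j + 2) = a ^ (j + 1) from h2, hA j]
  have hxax : x * a * x = x := by
    calc x * a * x = x * a * (a * x ^ 2) := by rw [h1]
      _ = (x * a ^ 2 * x) * x := by noncomm_ring
      _ = a * x * x := by rw [hkey]
      _ = a * x ^ 2 := by noncomm_ring
      _ = x := h1
  refine ⟨?_, ?_, 1, ?_⟩
  · -- x * (a^2*x)^2 = a^2*x
    rw [show x * (a ^ 2 * x) ^ 2 = (x * a ^ 2 * x) * a ^ 2 * x by noncomm_ring, hkey,
      show a * x * a ^ 2 * x = a * (x * a ^ 2 * x) by noncomm_ring, hkey, ← mul_assoc,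
      ← pow_two]
  · -- star condition
    have e : star x * x ^ 2 * (a ^ 2 * x) = star x * x := by
      rw [show star x * x ^ 2 * (a ^ 2 * x) = star x * (x * (x * a ^ 2 * x)) by noncomm_ring,
        hkey, show x * (a * x) = x * a * x by rw [mul_assoc], hxax]
    rw [e, star_mul, star_star]
  · -- x^1 = a^2*x * x^2
    rw [pow_one, show a ^ 2 * x * x ^ 2 = a * ((a * x ^ 2) * x) by noncomm_ring, h1,
      show a * (x * x) = a * x ^ 2 by noncomm_ring, h1]
end

section
/- Let R be a ring with proper involution and let m be a positive integer. An element a ∈ R has an m-weak group inverse if and only if a^m has a weak group inverse. Moreover, if y is a weak group inverse of a^m, then a^(m-1) y is an m-weak group inverse of a; that is, a^{W_m} = a^(m-1) (a^m)^{W}. -/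
section AuxLemmas

variable {R : Type*} [Ring R] [StarRing R]

/-- From `z * a^(n+1) = a^n` we get the same for all larger exponents. -/
private lemma zstep (a z : R) {n : ℕ} (h : z * a ^ (n + 1) = a ^ n) :
    ∀ j : ℕ, z * a ^ (n + j + 1) = a ^ (n + j) := by
  intro j
  induction j with
  | zero => simpa using h
  | succ j ih =>
    show z * a ^ (n + j + 1 + 1) = a ^ (n + j + 1)
    rw [pow_succ a (n + j + 1), ← mul_assoc, ih, ← pow_succ a (n + j)]

/-- From `a * z^2 = z` we get `a^n * z^(n+1) = z`. -/
private lemma apow_zpow (a z : R) (h1 : a * z ^ 2 = z) :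
    ∀ n : ℕ, a ^ n * z ^ (n + 1) = z := by
  intro n
  induction n with
  | zero => simp
  | succ n ih =>
    show a ^ (n + 1) * z ^ (n + 1 + 1) = z
    rw [pow_succ a n, pow_succ' z (n + 1), pow_succ' z n]
    have e : (a ^ n * a) * (z * (z * z ^ n)) = a ^ n * (a * z ^ 2) * z ^ n := by
      rw [pow_two z]; simp only [mul_assoc]
    rw [e, h1, mul_assoc, ← pow_succ' z n]
    exact ih

/-- From `a * z^2 = z` : `a^(n+1+i) * z^(i+1) = a^(n+1) * z`. -/
private lemma desc (a z : R) (h1 : a * z ^ 2 = z) (n : ℕ) :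
    ∀ i : ℕ, a ^ (n + 1 + i) * z ^ (i + 1) = a ^ (n + 1) * z := by
  intro i
  induction i with
  | zero => simp
  | succ i ih =>
    show a ^ (n + 1 + i + 1) * z ^ (i + 1 + 1) = a ^ (n + 1) * z
    rw [pow_succ a (n + 1 + i), pow_succ' z (i + 1), pow_succ' z i]
    have e : (a ^ (n + 1 + i) * a) * (z * (z * z ^ i))
        = a ^ (n + 1 + i) * (a * z ^ 2) * z ^ i := by
      rw [pow_two z]; simp only [mul_assoc]
    rw [e, h1, mul_assoc, ← pow_succ' z i]
    exact ih

/-- From `z * a^(k+1) = a^k` : `z^j * a^(k+j) = a^k`. -/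
private lemma zpow_apow (a z : R) {k : ℕ} (h : z * a ^ (k + 1) = a ^ k) :
    ∀ j : ℕ, z ^ j * a ^ (k + j) = a ^ k := by
  intro j
  induction j with
  | zero => simp
  | succ j ih =>
    show z ^ (j + 1) * a ^ (k + j + 1) = a ^ k
    rw [pow_succ z j, mul_assoc, zstep a z h j]
    exact ih

private lemma aux_fwd (s k : ℕ) (a z : R)
    (h1 : a * z ^ 2 = z)
    (h2 : z * a ^ (k + 1) = a ^ k)
    (h3 : star (a ^ k) * a ^ (s + 1 + 1) * z = star (a ^ k) * a ^ (s + 1)) :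
    IsWGI (a ^ (s + 1)) (z ^ (s + 1)) := by
  refine ⟨?_, ?_, k, ?_⟩
  · -- a^(s+1) * (z^(s+1))^2 = z^(s+1)
    have e1 : (z ^ (s + 1)) ^ 2 = z ^ (s + 1 + 1) * z ^ s := by
      rw [← pow_add z (s + 1 + 1) s, ← pow_mul z (s + 1) 2,
        show (s + 1) * 2 = s + 1 + 1 + s by ring]
    calc a ^ (s + 1) * (z ^ (s + 1)) ^ 2
        = a ^ (s + 1) * z ^ (s + 1 + 1) * z ^ s := by rw [e1, ← mul_assoc]
      _ = z * z ^ s := by rw [apow_zpow a z h1 (s + 1)]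
      _ = z ^ (s + 1) := (pow_succ' z s).symm
  · -- star condition
    rw [mul_assoc] at h3
    have hstar : ∀ j : ℕ, star (a ^ (k + j)) * (a ^ (s + 1 + 1) * z)
        = star (a ^ (k + j)) * a ^ (s + 1) := by
      intro j
      induction j with
      | zero => simpa using h3
      | succ j ih =>
        have e : star (a ^ (k + j + 1)) = star a * star (a ^ (k + j)) := by
          rw [pow_succ a (k + j), star_mul]
        show star (a ^ (k + j + 1)) * (a ^ (s + 1 + 1) * z)
            = star (a ^ (k + j + 1)) * a ^ (s + 1)
        rw [e, mul_assoc, ih, ← mul_assoc]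
    have hXk : a ^ (s + 1 + 1 + k) * z ^ (k + 1) = a ^ (s + 1 + 1) * z := by
      rw [pow_add a (s + 1 + 1) k, mul_assoc, apow_zpow a z h1 k]
    have hstarX : star (a ^ (s + 1 + 1) * z)
        = star (z ^ (k + 1)) * star (a ^ (s + 1 + 1 + k)) := by
      rw [← hXk, star_mul]
    have E1 : star (a ^ (s + 1 + 1) * z) * (a ^ (s + 1 + 1) * z)
        = star (a ^ (s + 1 + 1) * z) * a ^ (s + 1) := by
      rw [hstarX, mul_assoc, mul_assoc, show s + 1 + 1 + k = k + (s + 1 + 1) by ring,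
        hstar (s + 1 + 1)]
    have E2 : star (a ^ (s + 1 + 1) * z) * (a ^ (s + 1 + 1) * z)
        = star (a ^ (s + 1)) * (a ^ (s + 1 + 1) * z) := by
      have h := congrArg star E1
      rwa [star_mul (star (a ^ (s + 1 + 1) * z)) (a ^ (s + 1 + 1) * z),
        star_mul (star (a ^ (s + 1 + 1) * z)) (a ^ (s + 1)),
        star_star] at h
    have hX : (a ^ (s + 1)) ^ 2 * z ^ (s + 1) = a ^ (s + 1 + 1) * z := by
      rw [← pow_mul a (s + 1) 2, show (s + 1) * 2 = s + 1 + 1 + s by ring]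
      exact desc a z h1 (s + 1) s
    rw [mul_assoc, hX]
    calc star (star (a ^ (s + 1)) * (a ^ (s + 1 + 1) * z))
        = star (a ^ (s + 1 + 1) * z) * a ^ (s + 1) := by rw [star_mul, star_star]
      _ = star (a ^ (s + 1 + 1) * z) * (a ^ (s + 1 + 1) * z) := E1.symm
      _ = star (a ^ (s + 1)) * (a ^ (s + 1 + 1) * z) := E2
  · -- (a^(s+1))^k = z^(s+1) * (a^(s+1))^(k+1)
    have hL2 := zpow_apow a z h2 (s + 1)
    calc (a ^ (s + 1)) ^ k = a ^ ((s + 1) * k) := (pow_mul a (s + 1) k).symm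
      _ = a ^ k * a ^ (s * k) := by
          rw [← pow_add a k (s * k), show k + s * k = (s + 1) * k by ring]
      _ = z ^ (s + 1) * a ^ (k + (s + 1)) * a ^ (s * k) := by rw [hL2]
      _ = z ^ (s + 1) * a ^ ((s + 1) * (k + 1)) := by
          rw [mul_assoc, ← pow_add a (k + (s + 1)) (s * k),
            show k + (s + 1) + s * k = (s + 1) * (k + 1) by ring]
      _ = z ^ (s + 1) * (a ^ (s + 1)) ^ (k + 1) := by rw [pow_mul a (s + 1) (k + 1)]

private lemma aux_bwd (s k0 : ℕ) (a y : R)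
    (h1 : a ^ (s + 1) * y ^ 2 = y)
    (h2 : star (star (a ^ (s + 1)) * (a ^ (s + 1)) ^ 2 * y)
        = star (a ^ (s + 1)) * (a ^ (s + 1)) ^ 2 * y)
    (h3 : (a ^ (s + 1)) ^ k0 = y * (a ^ (s + 1)) ^ (k0 + 1)) :
    IsMWGI (s + 1) a (a ^ s * y) := by
  have h3a : a ^ ((s + 1) * k0) = y * a ^ ((s + 1) * (k0 + 1)) := by
    rw [pow_mul a (s + 1) k0, pow_mul a (s + 1) (k0 + 1)]
    exact h3
  have hy2 : y * (a ^ (s + 1)) ^ (k0 + 2) = (a ^ (s + 1)) ^ (k0 + 1) := by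
    rw [pow_succ (a ^ (s + 1)) (k0 + 1), ← mul_assoc, ← h3, ← pow_succ (a ^ (s + 1)) k0]
  have hk2 : y * a ^ ((s + 1) * (k0 + 2)) = a ^ ((s + 1) * (k0 + 1)) := by
    rw [pow_mul a (s + 1) (k0 + 2), pow_mul a (s + 1) (k0 + 1)]
    exact hy2
  have key : a ^ (s + 1) * (a ^ s * y) * y = a ^ s * y := by
    have e : a ^ (s + 1) * a ^ s = a ^ s * a ^ (s + 1) := by
      rw [← pow_add a (s + 1) s, ← pow_add a s (s + 1), show s + 1 + s = s + (s + 1) by ring]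
    calc a ^ (s + 1) * (a ^ s * y) * y = a ^ (s + 1) * a ^ s * (y * y) := by
          simp only [mul_assoc]
      _ = a ^ s * a ^ (s + 1) * (y * y) := by rw [e]
      _ = a ^ s * (a ^ (s + 1) * y ^ 2) := by rw [pow_two y]; simp only [mul_assoc]
      _ = a ^ s * y := by rw [h1]
  have zby : ∀ n : ℕ, a ^ ((s + 1) * n) * (a ^ s * y) * y ^ n = a ^ s * y := by
    intro n
    induction n with
    | zero => simp
    | succ n ih =>
      calc a ^ ((s + 1) * (n + 1)) * (a ^ s * y) * y ^ (n + 1)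
          = a ^ ((s + 1) * n) * (a ^ (s + 1) * (a ^ s * y) * y) * y ^ n := by
            rw [show (s + 1) * (n + 1) = (s + 1) * n + (s + 1) by ring,
              pow_add a ((s + 1) * n) (s + 1), pow_succ' y n]
            simp only [mul_assoc]
        _ = a ^ ((s + 1) * n) * (a ^ s * y) * y ^ n := by rw [key]
        _ = a ^ s * y := ih
  have ha : a * (a ^ s * y) = a ^ (s + 1) * y := by
    rw [pow_succ' a s, mul_assoc]
  refine ⟨?_, (s + 1) * (k0 + 3), ?_, ?_⟩
  · -- a * (a^s*y)^2 = a^s*y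
    calc a * (a ^ s * y) ^ 2
        = a ^ (s + 1) * y * (a ^ s * y) := by rw [pow_two (a ^ s * y), ← mul_assoc, ha]
      _ = a ^ (s + 1) * y * (a ^ ((s + 1) * (k0 + 1)) * (a ^ s * y) * y ^ (k0 + 1)) := by
          rw [zby (k0 + 1)]
      _ = a ^ (s + 1) * (y * a ^ ((s + 1) * (k0 + 1))) * ((a ^ s * y) * y ^ (k0 + 1)) := by
          simp only [mul_assoc]
      _ = a ^ (s + 1) * a ^ ((s + 1) * k0) * ((a ^ s * y) * y ^ (k0 + 1)) := by rw [← h3a]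
      _ = a ^ ((s + 1) * (k0 + 1)) * ((a ^ s * y) * y ^ (k0 + 1)) := by
          rw [← pow_add a (s + 1) ((s + 1) * k0),
            show s + 1 + (s + 1) * k0 = (s + 1) * (k0 + 1) by ring]
      _ = a ^ ((s + 1) * (k0 + 1)) * (a ^ s * y) * y ^ (k0 + 1) := by
          simp only [mul_assoc]
      _ = a ^ s * y := zby (k0 + 1)
  · -- (a^s*y) * a^(K+1) = a^K for K = (s+1)*(k0+3)
    have hbase : (a ^ s * y) * a ^ (s + (s + 1) * (k0 + 1) + 1) = a ^ (s + (s + 1) * (k0 + 1)) := by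
      rw [show s + (s + 1) * (k0 + 1) + 1 = (s + 1) * (k0 + 2) by ring, mul_assoc, hk2,
        ← pow_add a s ((s + 1) * (k0 + 1))]
    have hii := zstep a (a ^ s * y) hbase (s + 2)
    rw [show (s + 1) * (k0 + 3) = s + (s + 1) * (k0 + 1) + (s + 2) by ring]
    exact hii
  · -- star condition
    rw [star_mul, star_mul, star_star] at h2
    -- h2 : star y * (star ((a^(s+1))^2) * a^(s+1)) = star (a^(s+1)) * (a^(s+1))^2 * y
    have ec : (a ^ (s + 1)) ^ (k0 + 3) = a ^ (s + 1) * (a ^ (s + 1)) ^ (k0 + 2) :=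
      pow_succ' (a ^ (s + 1)) (k0 + 2)
    have F : star y * (star ((a ^ (s + 1)) ^ 2) * (a ^ (s + 1)) ^ (k0 + 3))
        = star (a ^ (s + 1)) * (a ^ (s + 1)) ^ (k0 + 3) := by
      calc star y * (star ((a ^ (s + 1)) ^ 2) * (a ^ (s + 1)) ^ (k0 + 3))
          = star y * (star ((a ^ (s + 1)) ^ 2) * a ^ (s + 1)) * (a ^ (s + 1)) ^ (k0 + 2) := by
            rw [ec]; simp only [mul_assoc]
        _ = star (a ^ (s + 1)) * (a ^ (s + 1)) ^ 2 * y * (a ^ (s + 1)) ^ (k0 + 2) := by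
            rw [h2]
        _ = star (a ^ (s + 1)) * ((a ^ (s + 1)) ^ 2 * (y * (a ^ (s + 1)) ^ (k0 + 2))) := by
            simp only [mul_assoc]
        _ = star (a ^ (s + 1)) * ((a ^ (s + 1)) ^ 2 * (a ^ (s + 1)) ^ (k0 + 1)) := by
            rw [hy2]
        _ = star (a ^ (s + 1)) * (a ^ (s + 1)) ^ (k0 + 3) := by
            rw [← pow_add (a ^ (s + 1)) 2 (k0 + 1), show 2 + (k0 + 1) = k0 + 3 by ring]
    have hby2 : a ^ (s + 1 + 1) * (a ^ s * y) = (a ^ (s + 1)) ^ 2 * y := by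
      rw [← pow_mul a (s + 1) 2, ← mul_assoc, ← pow_add a (s + 1 + 1) s,
        show s + 1 + 1 + s = (s + 1) * 2 by ring]
    have hKc : a ^ ((s + 1) * (k0 + 3)) = (a ^ (s + 1)) ^ (k0 + 3) := pow_mul a (s + 1) (k0 + 3)
    rw [hKc, mul_assoc, hby2]
    refine star_injective ?_
    rw [star_mul, star_mul, star_star, star_mul, star_star, mul_assoc]
    exact F

end AuxLemmas

theorem mwgi_iff_pow_wgi {R : Type*} [Ring R] [StarRing R]
    (hproper : ∀ x : R, star x * x = 0 → x = 0)
    (m : ℕ) (hm : 0 < m) (a : R) :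
    ((∃ z : R, IsMWGI m a z) ↔ ∃ w : R, IsWGI (a ^ m) w) ∧
      ∀ y : R, IsWGI (a ^ m) y → IsMWGI m a (a ^ (m - 1) * y) := by
  obtain ⟨s, rfl⟩ : ∃ s, m = s + 1 := ⟨m - 1, by omega⟩
  refine ⟨⟨?_, ?_⟩, ?_⟩
  · rintro ⟨z, h1, k, h2, h3⟩
    exact ⟨z ^ (s + 1), aux_fwd s k a z h1 h2 h3⟩
  · rintro ⟨w, h1, h2, k0, h3⟩
    exact ⟨a ^ s * w, aux_bwd s k0 a w h1 h2 h3⟩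
  · rintro y ⟨h1, h2, k0, h3⟩
    exact aux_bwd s k0 a y h1 h2 h3
end

section
/- Let R be a ring with proper involution, let x be a weak group inverse of a ∈ R and let y be a weak group inverse of b ∈ R. If a b = 0, b a = 0 and a^* b = 0, then a + b has a weak group inverse, and x + y is a weak group inverse of a + b. -/
set_option linter.unusedSectionVars false
set_option linter.unusedVariables false

section WgiAux

variable {R : Type*} [Ring R] [StarRing R]

private lemma wgi_L1 {a x : R} (h : a * x ^ 2 = x) : ∀ n : ℕ, a ^ n * x ^ (n + 1) = x := by
  intro n
  induction n with
  | zero => simp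
  | succ n ih =>
    calc a ^ (n+1) * x ^ (n+1+1) = a * (a ^ n * x ^ (n+1)) * x := by
          rw [pow_succ' a n, pow_succ x (n+1)]
          simp only [mul_assoc]
      _ = a * x * x := by rw [ih]
      _ = a * x ^ 2 := by rw [pow_two, mul_assoc]
      _ = x := h

private lemma wgi_L2 {a x : R} (h : a * x ^ 2 = x) (n : ℕ) :
    a ^ (n+1) * x ^ (n+1) = a * x := by
  calc a ^ (n+1) * x ^ (n+1) = a * (a ^ n * x ^ (n+1)) := by rw [pow_succ' a n, mul_assoc]
    _ = a * x := by rw [wgi_L1 h n]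

private lemma wgi_L3 {a x : R} (h : a * x ^ 2 = x) (n : ℕ) :
    a ^ (n+1+1) * x ^ (n+1) = a * (a * x) := by
  calc a ^ (n+1+1) * x ^ (n+1) = a * (a ^ (n+1) * x ^ (n+1)) := by
        rw [pow_succ' a (n+1), mul_assoc]
    _ = a * (a * x) := by rw [wgi_L2 h n]

private lemma wgi_descend {a x : R} {k : ℕ} (h : a ^ k = x * a ^ (k+1)) :
    ∀ m : ℕ, k ≤ m → a ^ m = x * a ^ (m+1) := by
  intro m hm
  induction m, hm using Nat.le_induction with
  | base => exact h
  | succ m hm ih =>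
    rw [pow_succ a m, ih, mul_assoc, ← pow_succ]

private lemma wgi_xax {a x : R} (hx1 : a * x ^ 2 = x) {k : ℕ} (hx3 : a ^ k = x * a ^ (k+1)) :
    x * (a * x) = x := by
  calc x * (a * x) = x * (a ^ (k+1) * x ^ (k+1)) := by rw [wgi_L2 hx1 k]
    _ = (x * a ^ (k+1)) * x ^ (k+1) := (mul_assoc x _ _).symm
    _ = a ^ k * x ^ (k+1) := by rw [← hx3]
    _ = x := wgi_L1 hx1 k

private lemma wgi_keyD {a x z : R} (hx1 : a * x ^ 2 = x) {k : ℕ}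
    (hx3 : a ^ k = x * a ^ (k+1)) (hz : a * (x * z) = z) (haz : a * z = 0) : z = 0 := by
  have hd : a ^ (k+1) = x * a ^ (k+1+1) := wgi_descend hx3 (k+1) (Nat.le_succ k)
  calc z = a * (x * z) := hz.symm
    _ = a ^ (k+1) * x ^ (k+1) * z := by rw [wgi_L2 hx1 k]; simp only [mul_assoc]
    _ = x * a ^ (k+1+1) * x ^ (k+1) * z := by rw [← hd]
    _ = x * (a ^ (k+1+1) * x ^ (k+1)) * z := by simp only [mul_assoc]
    _ = x * (a * (a * x)) * z := by rw [wgi_L3 hx1 k]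
    _ = x * (a * (a * (x * z))) := by simp only [mul_assoc]
    _ = x * (a * z) := by rw [hz]
    _ = 0 := by rw [haz, mul_zero]

/-- If `x` is a weak group inverse of `a` and `a * c = 0`, `star a * c = 0`, then `x * c = 0`. -/
private lemma wgi_mul_zero (hproper : ∀ x : R, star x * x = 0 → x = 0)
    {a x c : R} (hx1 : a * x ^ 2 = x)
    (hx2 : star (star a * a ^ 2 * x) = star a * a ^ 2 * x)
    {k : ℕ} (hx3 : a ^ k = x * a ^ (k+1))
    (h1 : a * c = 0) (h2 : star a * c = 0) : x * c = 0 := by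
  -- Step 1 : star a * a^2 * x * c = 0
  have s1 : star a * (a * (a * (x * c))) = 0 := by
    have t1 : star a * (a * (a * (x * c))) = (star a * a ^ 2 * x) * c := by
      simp only [pow_two, mul_assoc]
    rw [t1, ← hx2]
    simp only [star_mul, star_star, star_pow, pow_two, mul_assoc]
    rw [h1]
    simp
  -- Step 2 : a^2 * x * c = 0, via properness
  have s2 : a * (a * (x * c)) = 0 := by
    apply hproper
    have t2 : star (a * (a * (x * c))) * (a * (a * (x * c))) =
        star c * (star x * (star a * (star a * (a * (a * (x * c)))))) := by
      simp only [star_mul, mul_assoc]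
    rw [t2, s1]
    simp
  -- Step 3 : conclude with the key injectivity lemma
  have hxax : x * (a * x) = x := wgi_xax hx1 hx3
  have t3 : x * (a * (x * c)) = x * c := by
    calc x * (a * (x * c)) = (x * (a * x)) * c := by simp only [mul_assoc]
      _ = x * c := by rw [hxax]
  have hz : a * (x * (a * (x * c))) = a * (x * c) := by rw [t3]
  have hz0 : a * (x * c) = 0 := wgi_keyD hx1 hx3 hz s2
  rw [← t3, hz0, mul_zero]

end WgiAux

theorem wgi_add {R : Type*} [Ring R] [StarRing R]
    (hproper : ∀ x : R, star x * x = 0 → x = 0)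
    (a b x y : R) (hx : IsWGI a x) (hy : IsWGI b y)
    (hab : a * b = 0) (hba : b * a = 0) (hsab : star a * b = 0) :
    IsWGI (a + b) (x + y) := by
  obtain ⟨hx1, hx2, k1, hx3⟩ := hx
  obtain ⟨hy1, hy2, k2, hy3⟩ := hy
  have hsba : star b * a = 0 := by
    have h := congrArg star hsab
    simpa [star_mul] using h
  have hxb : x * b = 0 := wgi_mul_zero hproper hx1 hx2 hx3 hab hsab
  have hya : y * a = 0 := wgi_mul_zero hproper hy1 hy2 hy3 hba hsba
  have hbx : b * x = 0 := by
    have t : b * (a * x ^ 2) = b * x := by rw [hx1]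
    rw [← t, ← mul_assoc, hba, zero_mul]
  have hay : a * y = 0 := by
    have t : a * (b * y ^ 2) = a * y := by rw [hy1]
    rw [← t, ← mul_assoc, hab, zero_mul]
  have hxy : x * y = 0 := by
    have t : x * (b * y ^ 2) = x * y := by rw [hy1]
    rw [← t, ← mul_assoc, hxb, zero_mul]
  have hyx : y * x = 0 := by
    have t : y * (a * x ^ 2) = y * x := by rw [hx1]
    rw [← t, ← mul_assoc, hya, zero_mul]
  have hx1' : a * (x * x) = x := by rw [← pow_two x]; exact hx1
  have hy1' : b * (y * y) = y := by rw [← pow_two y]; exact hy1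
  refine ⟨?_, ?_, ⟨k1 + k2 + 1, ?_⟩⟩
  · -- (a+b) * (x+y)^2 = x + y
    have e : (a + b) * (x + y) ^ 2 =
        a * (x * x) + a * (x * y) + a * (y * x) + a * (y * y) +
        (b * (x * x) + b * (x * y) + b * (y * x) + b * (y * y)) := by
      simp only [pow_two, mul_add, add_mul, mul_assoc]
      abel
    rw [e, hxy, hyx]
    rw [← mul_assoc a y y, hay, ← mul_assoc b x x, hbx]
    rw [hx1', hy1']
    simp
  · -- star condition
    have h2ab : (a + b) ^ 2 = a ^ 2 + b ^ 2 := by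
      have e : (a + b) ^ 2 = a * a + a * b + (b * a + b * b) := by
        simp only [pow_two, mul_add, add_mul]
        abel
      rw [e, hab, hba]
      simp only [add_zero, zero_add]
      rw [← pow_two, ← pow_two]
    have E : star (a + b) * (a + b) ^ 2 * (x + y) =
        star a * a ^ 2 * x + star b * b ^ 2 * y := by
      rw [h2ab, star_add]
      have e : (star a + star b) * (a ^ 2 + b ^ 2) * (x + y) =
          star a * a ^ 2 * x + star b * b ^ 2 * y +
          (star a * (a * (a * y)) + star b * (b * (b * x)) +
            (star a * b) * (b * x) + (star a * b) * (b * y) +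
            (star b * a) * (a * x) + (star b * a) * (a * y)) := by
        simp only [pow_two, mul_add, add_mul, mul_assoc]
        abel
      rw [e, hay, hsab, hsba, hbx]
      simp
    rw [E, star_add, hx2, hy2]
  · -- power condition with K = k1 + k2 + 1
    have hpow : ∀ n : ℕ, (a + b) ^ (n + 1) = a ^ (n + 1) + b ^ (n + 1) := by
      intro n
      induction n with
      | zero => simp
      | succ n ih =>
        have ha' : a ^ (n+1) * b = 0 := by rw [pow_succ, mul_assoc, hab, mul_zero]
        have hb' : b ^ (n+1) * a = 0 := by rw [pow_succ, mul_assoc, hba, mul_zero]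
        rw [pow_succ (a+b) (n+1), ih, add_mul, mul_add, mul_add, ha', hb',
          ← pow_succ, ← pow_succ]
        simp
    have hxaK : a ^ (k1 + k2 + 1) = x * a ^ (k1 + k2 + 1 + 1) :=
      wgi_descend hx3 (k1 + k2 + 1) (by omega)
    have hybK : b ^ (k1 + k2 + 1) = y * b ^ (k1 + k2 + 1 + 1) :=
      wgi_descend hy3 (k1 + k2 + 1) (by omega)
    have hxbK : x * b ^ (k1 + k2 + 1 + 1) = 0 := by
      rw [pow_succ' b (k1 + k2 + 1), ← mul_assoc, hxb, zero_mul]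
    have hyaK : y * a ^ (k1 + k2 + 1 + 1) = 0 := by
      rw [pow_succ' a (k1 + k2 + 1), ← mul_assoc, hya, zero_mul]
    rw [hpow (k1 + k2), hpow (k1 + k2 + 1), add_mul, mul_add, mul_add,
      ← hxaK, ← hybK, hxbK, hyaK]
    simp
end

section
/- Let R be a ring with proper involution, m a positive integer, let x be an m-weak group inverse of a ∈ R and let y be an m-weak group inverse of b ∈ R. If a b = 0, b a = 0 and a^* b = 0, then a + b has an m-weak group inverse, and x + y is an m-weak group inverse of a + b. -/
section helpers
variable {R : Type*} [Ring R] [StarRing R]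

lemma mwgi_hax (a x : R) (h1 : a * x ^ 2 = x) : ∀ j, a ^ j * x ^ (j + 1) = x := by
  intro j
  induction j with
  | zero => simpa using rfl
  | succ n ih =>
    have hx2 : x ^ (n + 2) = x ^ 2 * x ^ n := by
      rw [← pow_add]; congr 1; omega
    calc a ^ (n + 1) * x ^ (n + 2) = (a ^ n * a) * (x ^ 2 * x ^ n) := by rw [pow_succ, hx2]
      _ = a ^ n * ((a * x ^ 2) * x ^ n) := by rw [mul_assoc, mul_assoc]
      _ = a ^ n * x ^ (n + 1) := by rw [h1, ← pow_succ']
      _ = x := ih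

lemma mwgi_shift (a x : R) (k : ℕ) (h2 : x * a ^ (k + 1) = a ^ k) (s : ℕ) :
    x * a ^ (k + 1 + s) = a ^ (k + s) := by
  rw [pow_add, ← mul_assoc, h2, ← pow_add]

lemma mwgi_hxa (a x : R) (k : ℕ) (h2 : x * a ^ (k + 1) = a ^ k) :
    ∀ j s, x ^ j * a ^ (k + j + s) = a ^ (k + s) := by
  intro j
  induction j with
  | zero => intro s; simp
  | succ n ih =>
    intro s
    have e : k + (n + 1) + s = k + 1 + (n + s) := by omega
    have e2 : k + (n + s) = k + n + s := by omega
    calc x ^ (n + 1) * a ^ (k + (n + 1) + s)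
        = x ^ n * (x * a ^ (k + 1 + (n + s))) := by rw [e, pow_succ, mul_assoc]
      _ = x ^ n * a ^ (k + (n + s)) := by rw [mwgi_shift a x k h2]
      _ = a ^ (k + s) := by rw [e2, ih]

lemma mwgi_trick (hproper : ∀ x : R, star x * x = 0 → x = 0)
    (c u : R) (h : star c * (c * u) = 0) : c * u = 0 := by
  apply hproper
  rw [star_mul, mul_assoc, h, mul_zero]

lemma mwgi_key_zero (hproper : ∀ x : R, star x * x = 0 → x = 0)
    (m k : ℕ) (hm : 0 < m) (a x c : R)
    (h1 : a * x ^ 2 = x) (h2 : x * a ^ (k + 1) = a ^ k)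
    (h3 : star (a ^ k) * a ^ (m + 1) * x = star (a ^ k) * a ^ m)
    (hac : a * c = 0) : x * c = 0 := by
  obtain ⟨m', rfl⟩ : ∃ m', m = m' + 1 := ⟨m - 1, by omega⟩
  have hax := mwgi_hax a x h1
  have hxa := mwgi_hxa a x k h2
  have hac' : ∀ n, a ^ (n + 1) * c = 0 := fun n => by
    rw [pow_succ, mul_assoc, hac, mul_zero]
  have haxk : a * x = a ^ (k + 1) * x ^ (k + 1) := by
    rw [pow_succ', mul_assoc, hax k]
  -- e2 : a^(m+1) * x = a^k * (a^(m+1) * x^(k+1))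
  have e2 : a ^ (m' + 1 + 1) * x = a ^ k * (a ^ (m' + 1 + 1) * x ^ (k + 1)) := by
    have l1 : a ^ (m' + 1 + 1) * x = a ^ (m' + 1 + (k + 1)) * x ^ (k + 1) := by
      rw [pow_succ, mul_assoc, haxk, ← mul_assoc, ← pow_add]
    have l2 : a ^ k * (a ^ (m' + 1 + 1) * x ^ (k + 1)) = a ^ (k + (m' + 1 + 1)) * x ^ (k + 1) := by
      rw [← mul_assoc, ← pow_add]
    have l3 : m' + 1 + (k + 1) = k + (m' + 1 + 1) := by omega
    rw [l1, l2, l3]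
  have e1 : star (a ^ k) * (a ^ k * (a ^ (m' + 1 + 1) * x ^ (k + 1) * c)) = 0 := by
    have : star (a ^ k) * a ^ (m' + 1 + 1) * x * c = 0 := by
      rw [h3, mul_assoc, hac' m', mul_zero]
    calc star (a ^ k) * (a ^ k * (a ^ (m' + 1 + 1) * x ^ (k + 1) * c))
        = star (a ^ k) * (a ^ k * (a ^ (m' + 1 + 1) * x ^ (k + 1)) * c) := by
          simp only [mul_assoc]
      _ = star (a ^ k) * (a ^ (m' + 1 + 1) * x * c) := by rw [← e2]
      _ = star (a ^ k) * a ^ (m' + 1 + 1) * x * c := by simp only [mul_assoc]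
      _ = 0 := this
  have e3 : a ^ k * (a ^ (m' + 1 + 1) * x ^ (k + 1) * c) = 0 := mwgi_trick hproper _ _ e1
  -- rewrite e3 as a^(k+m+2) * (x^(k+1) * c) = 0
  have e4 : a ^ (k + (m' + 1 + 1)) * (x ^ (k + 1) * c) = 0 := by
    rw [pow_add, mul_assoc, ← mul_assoc (a ^ (m' + 1 + 1)), e3]
  have e5 : x ^ (m' + 1 + 1) * a ^ (k + (m' + 1 + 1)) = a ^ k := by
    have := hxa (m' + 1 + 1) 0
    simpa using this
  calc x * c = a ^ k * x ^ (k + 1) * c := by rw [hax k]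
    _ = x ^ (m' + 1 + 1) * a ^ (k + (m' + 1 + 1)) * x ^ (k + 1) * c := by rw [e5]
    _ = x ^ (m' + 1 + 1) * (a ^ (k + (m' + 1 + 1)) * (x ^ (k + 1) * c)) := by
        simp only [mul_assoc]
    _ = 0 := by rw [e4, mul_zero]

end helpers

theorem mwgi_add {R : Type*} [Ring R] [StarRing R]
    (hproper : ∀ x : R, star x * x = 0 → x = 0)
    (m : ℕ) (hm : 0 < m) (a b x y : R)
    (hx : IsMWGI m a x) (hy : IsMWGI m b y)
    (hab : a * b = 0) (hba : b * a = 0) (hsab : star a * b = 0) :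
    IsMWGI m (a + b) (x + y) := by
  obtain ⟨hx1, k1, hx2, hx3⟩ := hx
  obtain ⟨hy1, k2, hy2, hy3⟩ := hy
  obtain ⟨m', rfl⟩ : ∃ m', m = m' + 1 := ⟨m - 1, by omega⟩
  set m := m' + 1 with hmdef
  have hsba : star b * a = 0 := by
    have := congrArg star hsab
    simpa using this
  -- basic zero products
  have hay : a * y = 0 := by rw [← hy1, ← mul_assoc, hab, zero_mul]
  have hbx : b * x = 0 := by rw [← hx1, ← mul_assoc, hba, zero_mul]
  have hxb : x * b = 0 := mwgi_key_zero hproper m k1 hm a x b hx1 hx2 hx3 hab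
  have hya : y * a = 0 := mwgi_key_zero hproper m k2 hm b y a hy1 hy2 hy3 hba
  have hanb : ∀ n, a ^ (n + 1) * b = 0 := fun n => by
    rw [pow_succ, mul_assoc, hab, mul_zero]
  have hbna : ∀ n, b ^ (n + 1) * a = 0 := fun n => by
    rw [pow_succ, mul_assoc, hba, mul_zero]
  have hany : ∀ n, a ^ (n + 1) * y = 0 := fun n => by
    rw [pow_succ, mul_assoc, hay, mul_zero]
  have hbnx : ∀ n, b ^ (n + 1) * x = 0 := fun n => by
    rw [pow_succ, mul_assoc, hbx, mul_zero]
  have hsanb : ∀ n, star (a ^ (n + 1)) * b = 0 := fun n => by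
    rw [star_pow, pow_succ, mul_assoc, hsab, mul_zero]
  have hsbna : ∀ n, star (b ^ (n + 1)) * a = 0 := fun n => by
    rw [star_pow, pow_succ, mul_assoc, hsba, mul_zero]
  -- binomial
  have hpow : ∀ n, (a + b) ^ (n + 1) = a ^ (n + 1) + b ^ (n + 1) := by
    intro n
    induction n with
    | zero => simp
    | succ n ih =>
      calc (a + b) ^ (n + 1 + 1) = (a ^ (n + 1) + b ^ (n + 1)) * (a + b) := by
            rw [pow_succ, ih]
        _ = a ^ (n + 2) + b ^ (n + 2) := by
            rw [add_mul, mul_add, mul_add, hanb, hbna, ← pow_succ, ← pow_succ]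
            abel
  set K := max k1 k2 + 1 with hK
  obtain ⟨s1, hs1⟩ : ∃ s, K = k1 + s := Nat.exists_eq_add_of_le (by omega)
  obtain ⟨s2, hs2⟩ : ∃ s, K = k2 + s := Nat.exists_eq_add_of_le (by omega)
  refine ⟨?_, K, ?_, ?_⟩
  · -- (a+b)(x+y)^2 = x+y
    have hxy : x * y = 0 := by rw [← hy1, ← mul_assoc, hxb, zero_mul]
    have hyx : y * x = 0 := by rw [← hx1, ← mul_assoc, hya, zero_mul]
    have hay2 : a * y ^ 2 = 0 := by rw [pow_two, ← mul_assoc, hay, zero_mul]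
    have hbx2 : b * x ^ 2 = 0 := by rw [pow_two, ← mul_assoc, hbx, zero_mul]
    have hsq : (x + y) ^ 2 = x ^ 2 + y ^ 2 := by
      rw [pow_two, add_mul, mul_add, mul_add, hxy, hyx, ← pow_two, ← pow_two]
      abel
    rw [hsq, add_mul, mul_add, mul_add, hx1, hy1, hay2, hbx2]
    abel
  · -- (x+y) * (a+b)^(K+1) = (a+b)^K
    obtain ⟨K', hK'⟩ : ∃ K', K = K' + 1 := ⟨max k1 k2, rfl⟩
    have hxK : x * a ^ (K + 1) = a ^ K := by
      have := mwgi_shift a x k1 hx2 s1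
      rw [hs1]
      have e : k1 + s1 + 1 = k1 + 1 + s1 := by omega
      rw [e]; exact this
    have hyK : y * b ^ (K + 1) = b ^ K := by
      have := mwgi_shift b y k2 hy2 s2
      rw [hs2]
      have e : k2 + s2 + 1 = k2 + 1 + s2 := by omega
      rw [e]; exact this
    have hxbK : x * b ^ (K + 1) = 0 := by
      rw [pow_succ', ← mul_assoc, hxb, zero_mul]
    have hyaK : y * a ^ (K + 1) = 0 := by
      rw [pow_succ', ← mul_assoc, hya, zero_mul]
    rw [hK', hpow (K' + 1), hpow K', ← hK']
    rw [add_mul, mul_add, mul_add, hxK, hyK, hxbK, hyaK]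
    abel
  · -- star((a+b)^K) * (a+b)^(m+1) * (x+y) = star((a+b)^K) * (a+b)^m
    obtain ⟨K', hK'⟩ : ∃ K', K = K' + 1 := ⟨max k1 k2, rfl⟩
    -- main terms
    have hstarA : star (a ^ K) = star (a ^ s1) * star (a ^ k1) := by
      rw [hs1, pow_add, star_mul]
    have hstarB : star (b ^ K) = star (b ^ s2) * star (b ^ k2) := by
      rw [hs2, pow_add, star_mul]
    have t1 : star (a ^ K) * a ^ (m + 1) * x = star (a ^ K) * a ^ m := by
      calc star (a ^ K) * a ^ (m + 1) * x
          = star (a ^ s1) * (star (a ^ k1) * a ^ (m + 1) * x) := by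
            rw [hstarA]; simp only [mul_assoc]
        _ = star (a ^ s1) * (star (a ^ k1) * a ^ m) := by rw [hx3]
        _ = star (a ^ K) * a ^ m := by rw [hstarA]; simp only [mul_assoc]
    have t2 : star (b ^ K) * b ^ (m + 1) * y = star (b ^ K) * b ^ m := by
      calc star (b ^ K) * b ^ (m + 1) * y
          = star (b ^ s2) * (star (b ^ k2) * b ^ (m + 1) * y) := by
            rw [hstarB]; simp only [mul_assoc]
        _ = star (b ^ s2) * (star (b ^ k2) * b ^ m) := by rw [hy3]
        _ = star (b ^ K) * b ^ m := by rw [hstarB]; simp only [mul_assoc]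
    -- zero terms
    have zsab : ∀ n, star (a ^ K) * b ^ (n + 1) = 0 := fun n => by
      have h0 : star (a ^ K) * b = 0 := by rw [hK']; exact hsanb K'
      rw [pow_succ' b n, ← mul_assoc, h0, zero_mul]
    have zsba : ∀ n, star (b ^ K) * a ^ (n + 1) = 0 := fun n => by
      have h0 : star (b ^ K) * a = 0 := by rw [hK']; exact hsbna K'
      rw [pow_succ' a n, ← mul_assoc, h0, zero_mul]
    have z2 : star (a ^ K) * b ^ (m + 1) * x = 0 := by rw [zsab, zero_mul]
    have z2' : star (a ^ K) * b ^ (m + 1) * y = 0 := by rw [zsab, zero_mul]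
    have z3 : star (b ^ K) * a ^ (m + 1) * x = 0 := by rw [zsba, zero_mul]
    have z3' : star (b ^ K) * a ^ (m + 1) * y = 0 := by rw [zsba, zero_mul]
    have z5 : star (a ^ K) * a ^ (m + 1) * y = 0 := by
      rw [mul_assoc, hany m, mul_zero]
    have z6 : star (b ^ K) * b ^ (m + 1) * x = 0 := by
      rw [mul_assoc, hbnx m, mul_zero]
    have r1 : star (a ^ K) * b ^ m = 0 := zsab m'
    have r2 : star (b ^ K) * a ^ m = 0 := zsba m'
    have hm1 : (a + b) ^ (m + 1) = a ^ (m + 1) + b ^ (m + 1) := hpow m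
    have hm0 : (a + b) ^ m = a ^ m + b ^ m := hpow m'
    have hKp : (a + b) ^ K = a ^ K + b ^ K := by rw [hK']; exact hpow K'
    rw [hm1, hm0, hKp, star_add]
    simp only [add_mul, mul_add]
    rw [t1, t2, z2, z2', z3, z3', z5, z6, r1, r2]
    abel
end

section
/- Let R be a ring with proper involution, let x be a weak group inverse of a ∈ R and let y be a weak group inverse of b ∈ R. If a b = b a and a^* b = b a^*, then a b has a weak group inverse, x y = y x, and x y is a weak group inverse of a b. -/
private lemma pow_eq' {R : Type*} [Monoid R] (a : R) {m n : ℕ} (h : m = n) : a ^ m = a ^ n := by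
  rw [h]

private lemma aux_absorb {R : Type*} [Ring R] {a x : R} (h : a * x ^ 2 = x) :
    ∀ n : ℕ, a ^ n * x ^ (n + 1) = x := by
  intro n
  induction n with
  | zero => simp
  | succ n ih =>
    have e2 : x ^ (n + 1 + 1) = x ^ 2 * x ^ n := by
      rw [← pow_add]; exact pow_eq' x (by omega)
    calc a ^ (n + 1) * x ^ (n + 1 + 1) = a ^ n * a * (x ^ 2 * x ^ n) := by rw [pow_succ, e2]
      _ = a ^ n * (a * x ^ 2) * x ^ n := by simp only [mul_assoc]
      _ = a ^ n * x * x ^ n := by rw [h]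
      _ = a ^ n * x ^ (n + 1) := by rw [mul_assoc, ← pow_succ']
      _ = x := ih

private lemma aux_step {R : Type*} [Ring R] {a x : R} (h : a * x ^ 2 = x) (n : ℕ) :
    a * x ^ (n + 2) = x ^ (n + 1) := by
  have e2 : x ^ (n + 2) = x ^ 2 * x ^ n := by
    rw [← pow_add]; exact pow_eq' x (by omega)
  calc a * x ^ (n + 2) = a * x ^ 2 * x ^ n := by rw [e2, mul_assoc]
    _ = x * x ^ n := by rw [h]
    _ = x ^ (n + 1) := by rw [← pow_succ']

private lemma aux_shift {R : Type*} [Ring R] {a x : R} {K : ℕ} (h : x * a ^ (K + 1) = a ^ K)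
    (j : ℕ) : x * a ^ (K + j + 1) = a ^ (K + j) := by
  have h1 : a ^ (K + j + 1) = a ^ (K + 1) * a ^ j := by
    rw [← pow_add]; exact pow_eq' a (by omega)
  rw [h1, ← mul_assoc, h, ← pow_add]

private lemma aux_powshift {R : Type*} [Ring R] {a x : R} {K : ℕ} (h : x * a ^ (K + 1) = a ^ K) :
    ∀ m j, x ^ m * a ^ (K + m + j) = a ^ (K + j) := by
  intro m
  induction m with
  | zero => intro j; simp
  | succ m ih =>
    intro j
    have e1 : x ^ (m + 1) = x ^ m * x := pow_succ x m
    have e2 : a ^ (K + (m + 1) + j) = a ^ (K + (m + j) + 1) := pow_eq' a (by omega)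
    calc x ^ (m + 1) * a ^ (K + (m + 1) + j)
        = x ^ m * (x * a ^ (K + (m + j) + 1)) := by rw [e1, e2, mul_assoc]
      _ = x ^ m * a ^ (K + (m + j)) := by rw [aux_shift h (m + j)]
      _ = a ^ (K + j) := by
          rw [pow_eq' a (show K + (m + j) = K + m + j by omega)]; exact ih j

private lemma comm_of_wgi {R : Type*} [Ring R] [StarRing R]
    (hproper : ∀ t : R, star t * t = 0 → t = 0)
    {a x c : R} (hx : IsWGI a x)
    (hca : c * a = a * c) (hcsa : c * star a = star a * c) :
    c * x = x * c := by
  obtain ⟨h1, h2, k, hk⟩ := hx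
  have hxk : x * a ^ (k + 1) = a ^ k := hk.symm
  -- commutation bookkeeping
  have Cca : Commute c a := hca
  have Ccsa : Commute c (star a) := hcsa
  have hc'a : Commute (star c) a := by
    have h := congrArg star hcsa
    simp only [star_mul, star_star] at h
    exact h.symm
  -- star P expansion
  have hPexp : star a * a ^ 2 * x = star x * ((star a) ^ 2 * a) := by
    rw [← h2]
    simp only [star_mul, star_pow, star_star, mul_assoc]
  -- d = a^(k+2) * u
  have hxA : a ^ (k + 2) * x ^ (k + 3) = x := by
    have h := aux_absorb h1 (k + 2)
    rwa [pow_eq' x (show k + 2 + 1 = k + 3 by omega)] at h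
  have hdu : c * x - x * c = a ^ (k + 2) * (c * x ^ (k + 3) - x ^ (k + 3) * c) := by
    rw [mul_sub]
    congr 1
    · calc c * x = c * (a ^ (k + 2) * x ^ (k + 3)) := by rw [hxA]
        _ = c * a ^ (k + 2) * x ^ (k + 3) := by rw [mul_assoc]
        _ = a ^ (k + 2) * c * x ^ (k + 3) := by rw [(Cca.pow_right (k + 2)).eq]
        _ = a ^ (k + 2) * (c * x ^ (k + 3)) := by rw [mul_assoc]
    · calc x * c = a ^ (k + 2) * x ^ (k + 3) * c := by rw [hxA]
        _ = a ^ (k + 2) * (x ^ (k + 3) * c) := by rw [mul_assoc]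
  -- d' * a^(k+3) = 0
  have hxa3 : x * a ^ (k + 3) = a ^ (k + 2) := by
    have h := aux_shift hxk 2
    rwa [pow_eq' a (show k + 2 + 1 = k + 3 by omega)] at h
  have hd'A : (star c * x - x * star c) * a ^ (k + 3) = 0 := by
    rw [sub_mul]
    have e1 : star c * x * a ^ (k + 3) = a ^ (k + 2) * star c := by
      rw [mul_assoc, hxa3, (hc'a.pow_right (k + 2)).eq]
    have e2 : x * star c * a ^ (k + 3) = a ^ (k + 2) * star c := by
      rw [mul_assoc, (hc'a.pow_right (k + 3)).eq, ← mul_assoc, hxa3]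
    rw [e1, e2, sub_self]
  -- key star identity
  have hT1 : star a * (a ^ 2 * (c * x)) = star (x * star c) * ((star a) ^ 2 * a) := by
    calc star a * (a ^ 2 * (c * x))
        = star a * (c * (a ^ 2 * x)) := by rw [(Cca.pow_right 2).symm.left_comm]
      _ = c * (star a * (a ^ 2 * x)) := by rw [Ccsa.symm.left_comm]
      _ = c * (star a * a ^ 2 * x) := by simp only [mul_assoc]
      _ = c * (star x * ((star a) ^ 2 * a)) := by rw [hPexp]
      _ = c * star x * ((star a) ^ 2 * a) := by rw [mul_assoc]
      _ = star (x * star c) * ((star a) ^ 2 * a) := by rw [star_mul, star_star]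
  have hT2 : star a * (a ^ 2 * (x * c)) = star (star c * x) * ((star a) ^ 2 * a) := by
    calc star a * (a ^ 2 * (x * c))
        = star a * a ^ 2 * x * c := by simp only [mul_assoc]
      _ = star x * ((star a) ^ 2 * a) * c := by rw [hPexp]
      _ = star x * ((star a) ^ 2 * (a * c)) := by simp only [mul_assoc]
      _ = star x * ((star a) ^ 2 * (c * a)) := by rw [← hca]
      _ = star x * (c * ((star a) ^ 2 * a)) := by rw [(Ccsa.pow_right 2).symm.left_comm]
      _ = star x * c * ((star a) ^ 2 * a) := by rw [mul_assoc]
      _ = star (star c * x) * ((star a) ^ 2 * a) := by rw [star_mul, star_star]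
  have hkey : star a * (a ^ 2 * (c * x - x * c))
      = -(star (a ^ 2 * (star c * x - x * star c)) * a) := by
    have lhs : star a * (a ^ 2 * (c * x - x * c))
        = star (x * star c) * ((star a) ^ 2 * a) - star (star c * x) * ((star a) ^ 2 * a) := by
      rw [mul_sub, mul_sub, hT1, hT2]
    rw [lhs, ← sub_mul, ← star_sub]
    have : x * star c - star c * x = -(star c * x - x * star c) := (neg_sub _ _).symm
    rw [this, star_neg, neg_mul]
    congr 1
    rw [star_mul, star_pow]
    simp only [mul_assoc]
  -- properness kills a^2 * d
  have hMform : a ^ 2 * (c * x - x * c) = a ^ (k + 4) * (c * x ^ (k + 3) - x ^ (k + 3) * c) := by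
    rw [hdu, ← mul_assoc, ← pow_add]
    rw [pow_eq' a (show 2 + (k + 2) = k + 4 by omega)]
  have hMM : star (a ^ 2 * (c * x - x * c)) * (a ^ 2 * (c * x - x * c)) = 0 := by
    set u := c * x ^ (k + 3) - x ^ (k + 3) * c with hu
    set d' := star c * x - x * star c with hd'
    calc star (a ^ 2 * (c * x - x * c)) * (a ^ 2 * (c * x - x * c))
        = star (a ^ (k + 4) * u) * (a ^ 2 * (c * x - x * c)) := by rw [hMform]
      _ = star u * ((star a) ^ (k + 4) * (a ^ 2 * (c * x - x * c))) := by
          rw [star_mul, star_pow, mul_assoc]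
      _ = star u * ((star a) ^ (k + 3) * (star a * (a ^ 2 * (c * x - x * c)))) := by
          rw [pow_succ, mul_assoc]
      _ = star u * ((star a) ^ (k + 3) * (-(star (a ^ 2 * d') * a))) := by rw [hkey]
      _ = star u * (-((star a) ^ (k + 3) * star (a ^ 2 * d') * a)) := by
          rw [mul_neg, mul_assoc]
      _ = star u * (-(star (a ^ 2 * d' * a ^ (k + 3)) * a)) := by
          rw [star_mul (a ^ 2 * d') (a ^ (k + 3)), star_pow]
      _ = 0 := by
          rw [mul_assoc (a ^ 2) d' (a ^ (k + 3)), hd'A, mul_zero, star_zero, zero_mul,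
            neg_zero, mul_zero]
  have hM0 : a ^ 2 * (c * x - x * c) = 0 := hproper _ hMM
  -- the Drazin-type inverse z
  obtain ⟨z, hzdef⟩ : ∃ z : R, z = x ^ (k + 3) * a ^ (k + 2) := ⟨_, rfl⟩
  have haxp : a * x ^ (k + 3) = x ^ (k + 2) := by
    have h := aux_step h1 (k + 1)
    rwa [pow_eq' x (show k + 1 + 2 = k + 3 by omega),
      pow_eq' x (show k + 1 + 1 = k + 2 by omega)] at h
  have haxp4 : a * x ^ (k + 4) = x ^ (k + 3) := by
    have h := aux_step h1 (k + 2)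
    rwa [pow_eq' x (show k + 2 + 2 = k + 4 by omega),
      pow_eq' x (show k + 2 + 1 = k + 3 by omega)] at h
  have haz : a * z = x ^ (k + 2) * a ^ (k + 2) := by
    rw [hzdef, ← mul_assoc, haxp]
  have hza : z * a = x ^ (k + 2) * a ^ (k + 2) := by
    rw [hzdef, mul_assoc, ← pow_succ]
    calc x ^ (k + 3) * a ^ (k + 2 + 1) = x ^ (k + 2) * (x * a ^ (k + 2 + 1)) := by
          rw [← mul_assoc, ← pow_succ]
      _ = x ^ (k + 2) * a ^ (k + 2) := by rw [aux_shift hxk 2]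
  have Caz : Commute a z := haz.trans hza.symm
  have hz2 : a * z ^ 2 = z := by
    have hzz : z * z = x ^ (k + 4) * a ^ (k + 2) := by
      calc z * z = x ^ (k + 3) * (a ^ (k + 2) * x ^ (k + 3)) * a ^ (k + 2) := by
            simp only [hzdef, mul_assoc]
        _ = x ^ (k + 3) * x * a ^ (k + 2) := by rw [hxA]
        _ = x ^ (k + 4) * a ^ (k + 2) := by rw [← pow_succ]
    calc a * z ^ 2 = a * (z * z) := by rw [sq]
      _ = a * (x ^ (k + 4) * a ^ (k + 2)) := by rw [hzz]
      _ = a * x ^ (k + 4) * a ^ (k + 2) := by rw [mul_assoc]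
      _ = x ^ (k + 3) * a ^ (k + 2) := by rw [haxp4]
      _ = z := hzdef.symm
  have hzA : z * a ^ (k + 2 + 1) = a ^ (k + 2) := by
    calc z * a ^ (k + 2 + 1) = x ^ (k + 3) * (a ^ (k + 2) * a ^ (k + 2 + 1)) := by
          rw [hzdef, mul_assoc]
      _ = x ^ (k + 3) * a ^ (k + (k + 3) + 2) := by
          rw [← pow_add, pow_eq' a (show k + 2 + (k + 2 + 1) = k + (k + 3) + 2 by omega)]
      _ = a ^ (k + 2) := aux_powshift hxk (k + 3) 2
  -- c commutes with z
  have hZ1 : ∀ n, a ^ n * z ^ (n + 1) = z := aux_absorb hz2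
  have hzk4 : z = a ^ (k + 3) * z ^ (k + 4) := by
    have h := hZ1 (k + 3)
    rw [pow_eq' z (show k + 3 + 1 = k + 4 by omega)] at h
    exact h.symm
  have hzk4' : z = z ^ (k + 4) * a ^ (k + 3) := hzk4.trans (Caz.pow_pow (k + 3) (k + 4)).eq
  have hA3z : a ^ (k + 3) * z = a ^ (k + 2) := by
    rw [(Caz.pow_left (k + 3)).eq, pow_eq' a (show k + 3 = k + 2 + 1 by omega), hzA]
  have hcz1 : c * z = a ^ (k + 3) * (c * z ^ (k + 4)) := by
    calc c * z = c * (a ^ (k + 3) * z ^ (k + 4)) := by rw [← hzk4]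
      _ = c * a ^ (k + 3) * z ^ (k + 4) := by rw [mul_assoc]
      _ = a ^ (k + 3) * c * z ^ (k + 4) := by rw [(Cca.pow_right (k + 3)).eq]
      _ = a ^ (k + 3) * (c * z ^ (k + 4)) := by rw [mul_assoc]
  have hm1 : a ^ (k + 3) * (c * z) = c * a ^ (k + 2) := by
    rw [← mul_assoc, ← (Cca.pow_right (k + 3)).eq, mul_assoc, hA3z]
  have hm2 : a ^ (k + 3) * (z * c) = c * a ^ (k + 2) := by
    rw [← mul_assoc, hA3z, ← (Cca.pow_right (k + 2)).eq]
  have hzz2 : z ^ (k + 3) * z ^ (k + 4) = z ^ (2 * k + 7) := by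
    rw [← pow_add]; exact pow_eq' z (by omega)
  have haa : a ^ (k + 3) * a ^ (k + 3) = a ^ (2 * k + 6) := by
    rw [← pow_add]; exact pow_eq' a (by omega)
  have hzfix : z ^ (2 * k + 7) * a ^ (2 * k + 6) = z := by
    rw [← (Caz.pow_pow (2 * k + 6) (2 * k + 7)).eq]
    have h := hZ1 (2 * k + 6)
    rwa [pow_eq' z (show 2 * k + 6 + 1 = 2 * k + 7 by omega)] at h
  have pcz : z ^ (k + 3) * (a ^ (k + 3) * (c * z)) = c * z := by
    have hps : z ^ (k + 3) * a ^ (2 * k + 6) = a ^ (k + 3) := by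
      have h := aux_powshift hzA (k + 3) 1
      rwa [pow_eq' a (show k + 2 + (k + 3) + 1 = 2 * k + 6 by omega),
        pow_eq' a (show k + 2 + 1 = k + 3 by omega)] at h
    calc z ^ (k + 3) * (a ^ (k + 3) * (c * z))
        = z ^ (k + 3) * (a ^ (k + 3) * (a ^ (k + 3) * (c * z ^ (k + 4)))) := by rw [hcz1]
      _ = z ^ (k + 3) * ((a ^ (k + 3) * a ^ (k + 3)) * (c * z ^ (k + 4))) := by
          simp only [mul_assoc]
      _ = z ^ (k + 3) * (a ^ (2 * k + 6) * (c * z ^ (k + 4))) := by rw [haa]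
      _ = z ^ (k + 3) * a ^ (2 * k + 6) * (c * z ^ (k + 4)) := by rw [mul_assoc]
      _ = a ^ (k + 3) * (c * z ^ (k + 4)) := by rw [hps]
      _ = c * z := hcz1.symm
  have hzc_exp : z * c = z ^ (k + 4) * (a ^ (k + 3) * c) := by
    conv_lhs => rw [hzk4']
    rw [mul_assoc]
  have pzc : z ^ (k + 3) * (a ^ (k + 3) * (z * c)) = z * c := by
    calc z ^ (k + 3) * (a ^ (k + 3) * (z * c))
        = z ^ (k + 3) * (a ^ (k + 3) * (z ^ (k + 4) * (a ^ (k + 3) * c))) := by rw [hzc_exp]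
      _ = z ^ (k + 3) * (z ^ (k + 4) * (a ^ (k + 3) * (a ^ (k + 3) * c))) := by
          rw [(Caz.pow_pow (k + 3) (k + 4)).left_comm]
      _ = (z ^ (k + 3) * z ^ (k + 4)) * ((a ^ (k + 3) * a ^ (k + 3)) * c) := by
          simp only [mul_assoc]
      _ = z ^ (2 * k + 7) * (a ^ (2 * k + 6) * c) := by rw [hzz2, haa]
      _ = (z ^ (2 * k + 7) * a ^ (2 * k + 6)) * c := by rw [mul_assoc]
      _ = z * c := by rw [hzfix]
  have hcz : c * z = z * c := by
    calc c * z = z ^ (k + 3) * (a ^ (k + 3) * (c * z)) := pcz.symm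
      _ = z ^ (k + 3) * (a ^ (k + 3) * (z * c)) := by rw [hm1, hm2]
      _ = z * c := pzc
  -- finish: x = z * (a * x) and a^(k+2) kills the commutator
  have hax' : a ^ (k + 3) * x = a ^ (2 * k + 5) * x ^ (k + 3) := by
    conv_lhs => rw [← hxA]
    rw [← mul_assoc, ← pow_add, pow_eq' a (show k + 3 + (k + 2) = 2 * k + 5 by omega)]
  have hstep : a ^ (k + 3) * x = a ^ (k + 2) * (a * x) := by
    rw [← mul_assoc, ← pow_succ, pow_eq' a (show k + 2 + 1 = k + 3 by omega)]
  have hxz : x = z * (a * x) := by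
    have hps : x ^ (k + 3) * a ^ (2 * k + 5) = a ^ (k + 2) := by
      have h := aux_powshift hxk (k + 3) 2
      rwa [pow_eq' a (show k + (k + 3) + 2 = 2 * k + 5 by omega)] at h
    calc x = a ^ (k + 2) * x ^ (k + 3) := hxA.symm
      _ = (x ^ (k + 3) * a ^ (2 * k + 5)) * x ^ (k + 3) := by rw [hps]
      _ = x ^ (k + 3) * (a ^ (2 * k + 5) * x ^ (k + 3)) := by rw [mul_assoc]
      _ = x ^ (k + 3) * (a ^ (k + 3) * x) := by rw [← hax']
      _ = x ^ (k + 3) * (a ^ (k + 2) * (a * x)) := by rw [hstep]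
      _ = (x ^ (k + 3) * a ^ (k + 2)) * (a * x) := by rw [mul_assoc]
      _ = z * (a * x) := by rw [hzdef]
  have hcx2 : c * x = z * (a * (c * x)) := by
    calc c * x = c * (z * (a * x)) := by conv_lhs => rw [hxz]
      _ = (c * z) * (a * x) := by rw [mul_assoc]
      _ = (z * c) * (a * x) := by rw [hcz]
      _ = z * ((c * a) * x) := by simp only [mul_assoc]
      _ = z * ((a * c) * x) := by rw [hca]
      _ = z * (a * (c * x)) := by rw [mul_assoc]
  have hxc2 : x * c = z * (a * (x * c)) := by
    calc x * c = (z * (a * x)) * c := by conv_lhs => rw [hxz]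
      _ = z * (a * (x * c)) := by simp only [mul_assoc]
  have hW : a ^ (k + 2) * (c * x - x * c) = 0 := by
    rw [pow_add, mul_assoc, hM0, mul_zero]
  have hfin : c * x - x * c = 0 := by
    calc c * x - x * c = z * (a * (c * x)) - z * (a * (x * c)) := by rw [← hcx2, ← hxc2]
      _ = z * (a * (c * x) - a * (x * c)) := by rw [mul_sub]
      _ = z * (a * (c * x - x * c)) := by rw [← mul_sub]
      _ = (z * a) * (c * x - x * c) := by rw [mul_assoc]
      _ = (x ^ (k + 2) * a ^ (k + 2)) * (c * x - x * c) := by rw [hza]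
      _ = x ^ (k + 2) * (a ^ (k + 2) * (c * x - x * c)) := by rw [mul_assoc]
      _ = 0 := by rw [hW, mul_zero]
  exact sub_eq_zero.mp hfin

theorem wgi_mul {R : Type*} [Ring R] [StarRing R]
    (hproper : ∀ x : R, star x * x = 0 → x = 0)
    (a b x y : R) (hx : IsWGI a x) (hy : IsWGI b y)
    (hab : a * b = b * a) (hsab : star a * b = b * star a) :
    x * y = y * x ∧ IsWGI (a * b) (x * y) := by
  have hax2 : a * x ^ 2 = x := hx.1
  have hby2 : b * y ^ 2 = y := hy.1
  have hPs : star (star a * a ^ 2 * x) = star a * a ^ 2 * x := hx.2.1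
  have hQs : star (star b * b ^ 2 * y) = star b * b ^ 2 * y := hy.2.1
  obtain ⟨kx, hkx⟩ := hx.2.2
  obtain ⟨ky, hky⟩ := hy.2.2
  have hkx' : x * a ^ (kx + 1) = a ^ kx := hkx.symm
  have hky' : y * b ^ (ky + 1) = b ^ ky := hky.symm
  -- derived commutations
  have hsb_a : star b * a = a * star b := by
    have h := congrArg star hsab
    simpa only [star_mul, star_star] using h
  have hsb_sa : star b * star a = star a * star b := by
    have h := congrArg star hab
    simpa only [star_mul] using h
  have hbx : b * x = x * b := comm_of_wgi hproper hx hab.symm hsab.symm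
  have hb'x : star b * x = x * star b := comm_of_wgi hproper hx hsb_a hsb_sa
  have hay : a * y = y * a := comm_of_wgi hproper hy hab hsb_a.symm
  have ha'y : star a * y = y * star a := comm_of_wgi hproper hy hsab hsb_sa.symm
  have hxy : x * y = y * x := comm_of_wgi hproper hy hbx.symm hb'x.symm
  have Cab : Commute a b := hab
  have Cbx : Commute b x := hbx
  have Cxy : Commute x y := hxy
  have Cay : Commute a y := hay
  refine ⟨hxy, ?_, ?_, ?_⟩
  · -- (a*b) * (x*y)^2 = x*y
    rw [Cxy.mul_pow]
    have hbx2 : b * x ^ 2 = x ^ 2 * b := (Cbx.pow_right 2).eq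
    calc a * b * (x ^ 2 * y ^ 2) = a * ((b * x ^ 2) * y ^ 2) := by simp only [mul_assoc]
      _ = a * ((x ^ 2 * b) * y ^ 2) := by rw [hbx2]
      _ = (a * x ^ 2) * (b * y ^ 2) := by simp only [mul_assoc]
      _ = x * y := by rw [hax2, hby2]
  · -- star condition
    have Csb_sa : Commute (star b) (star a) := hsb_sa
    have Csb_a : Commute (star b) a := hsb_a
    have Csb_x : Commute (star b) x := hb'x
    have hS : star (a * b) * (a * b) ^ 2 * (x * y)
        = (star a * a ^ 2 * x) * (star b * b ^ 2 * y) := by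
      rw [star_mul, Cab.mul_pow]
      simp only [mul_assoc]
      rw [(Cbx.pow_left 2).left_comm, Csb_sa.left_comm, (Csb_a.pow_right 2).left_comm,
        Csb_x.left_comm]
    rw [hS, star_mul, hPs, hQs]
    have Csa_b : Commute (star a) b := hsab
    have CPQ : Commute (star a * a ^ 2 * x) (star b * b ^ 2 * y) := by
      have C1 : Commute (star a) (star b * b ^ 2 * y) :=
        (Csb_sa.symm.mul_right (Csa_b.pow_right 2)).mul_right ha'y
      have C2 : Commute (a ^ 2) (star b * b ^ 2 * y) := by
        have Ca : Commute a (star b * b ^ 2 * y) :=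
          (Csb_a.symm.mul_right (Cab.pow_right 2)).mul_right Cay
        exact Ca.pow_left 2
      have C3 : Commute x (star b * b ^ 2 * y) :=
        (Csb_x.symm.mul_right (Cbx.symm.pow_right 2)).mul_right Cxy
      exact (C1.mul_left C2).mul_left C3
    exact CPQ.symm.eq
  · -- index condition
    refine ⟨kx + ky + 4, ?_⟩
    rw [Cab.mul_pow, Cab.mul_pow]
    have h1 : x * a ^ (kx + ky + 4 + 1) = a ^ (kx + ky + 4) := by
      have h := aux_shift hkx' (ky + 4)
      rwa [pow_eq' a (show kx + (ky + 4) + 1 = kx + ky + 4 + 1 by omega),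
        pow_eq' a (show kx + (ky + 4) = kx + ky + 4 by omega)] at h
    have h2 : y * b ^ (kx + ky + 4 + 1) = b ^ (kx + ky + 4) := by
      have h := aux_shift hky' (kx + 4)
      rwa [pow_eq' b (show ky + (kx + 4) + 1 = kx + ky + 4 + 1 by omega),
        pow_eq' b (show ky + (kx + 4) = kx + ky + 4 by omega)] at h
    have : x * y * (a ^ (kx + ky + 4 + 1) * b ^ (kx + ky + 4 + 1))
        = a ^ (kx + ky + 4) * b ^ (kx + ky + 4) := by
      calc x * y * (a ^ (kx + ky + 4 + 1) * b ^ (kx + ky + 4 + 1))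
          = x * (y * a ^ (kx + ky + 4 + 1)) * b ^ (kx + ky + 4 + 1) := by
            simp only [mul_assoc]
        _ = x * (a ^ (kx + ky + 4 + 1) * y) * b ^ (kx + ky + 4 + 1) := by
            rw [(Cay.pow_left (kx + ky + 4 + 1)).eq.symm]
        _ = (x * a ^ (kx + ky + 4 + 1)) * (y * b ^ (kx + ky + 4 + 1)) := by
            simp only [mul_assoc]
        _ = a ^ (kx + ky + 4) * b ^ (kx + ky + 4) := by rw [h1, h2]
    exact this.symm
end

section
/- Let R be a ring with proper involution, m a positive integer, let x be an m-weak group inverse of a ∈ R and let y be an m-weak group inverse of b ∈ R. If a b = b a and a^* b = b a^*, then a b has an m-weak group inverse, x y = y x, and x y is an m-weak group inverse of a b. -/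
section KeyLemma

variable {R : Type*} [Ring R] [StarRing R]

private lemma mwgi_bump2 {a x : R} {k : ℕ} (h : x * a ^ (k + 1) = a ^ k) (j : ℕ) :
    x * a ^ (k + j + 1) = a ^ (k + j) := by
  rw [show k + j + 1 = (k + 1) + j from by omega, pow_add, ← mul_assoc, h, ← pow_add]

private lemma mwgi_bump3 {a x : R} {k m : ℕ}
    (h : star (a ^ k) * a ^ (m + 1) * x = star (a ^ k) * a ^ m) (j : ℕ) :
    star (a ^ (k + j)) * a ^ (m + 1) * x = star (a ^ (k + j)) * a ^ m := by
  have h' : star (a ^ k) * (a ^ (m + 1) * x) = star (a ^ k) * a ^ m := by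
    rw [← mul_assoc]; exact h
  calc star (a ^ (k + j)) * a ^ (m + 1) * x
      = star (a ^ j) * (star (a ^ k) * (a ^ (m + 1) * x)) := by
        rw [pow_add, star_mul]; simp only [mul_assoc]
    _ = star (a ^ j) * (star (a ^ k) * a ^ m) := by rw [h']
    _ = star (a ^ (k + j)) * a ^ m := by rw [pow_add, star_mul, mul_assoc]

/-- Core double-commutant lemma: if `c` commutes with `a` and `star a`, and `x` is an
`m`-weak group inverse of `a` with index `n + 1 ≥ 1`, then `c` commutes with `x`. -/
private lemma mwgi_comm (hproper : ∀ u : R, star u * u = 0 → u = 0)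
    (m n : ℕ) (a x c : R)
    (h1 : a * x ^ 2 = x)
    (h2 : x * a ^ (n + 2) = a ^ (n + 1))
    (h3 : star (a ^ (n + 1)) * a ^ (m + 1) * x = star (a ^ (n + 1)) * a ^ m)
    (hca : c * a = a * c) (hcs : c * star a = star a * c) :
    c * x = x * c := by
  have h1' : a * (x * x) = x := by rw [← pow_two]; exact h1
  -- F1 : a^j * x^(j+1) = x
  have F1 : ∀ j, a ^ j * x ^ (j + 1) = x := by
    intro j
    induction j with
    | zero => simp
    | succ j ih =>
      have hx2 : x ^ (j + 2) = x * x * x ^ j := by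
        rw [pow_succ' x (j + 1), pow_succ' x j, ← mul_assoc]
      rw [pow_succ, hx2]
      calc a ^ j * a * (x * x * x ^ j) = a ^ j * (a * (x * x)) * x ^ j := by
            simp only [mul_assoc]
        _ = a ^ j * x ^ (j + 1) := by rw [h1', mul_assoc, ← pow_succ']
        _ = x := ih
  have F1n1 : a ^ (n + 1) * x ^ (n + 2) = x := F1 (n + 1)
  have F1n2 : a ^ (n + 2) * x ^ (n + 3) = x := F1 (n + 2)
  -- lifted h2
  have hxa : ∀ j, x * a ^ (n + 2 + j) = a ^ (n + 1 + j) := by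
    intro j
    rw [pow_add, ← mul_assoc, h2, ← pow_add]
  -- F4 : x^(j+1) * a^(n+2+j) = a^(n+1)
  have F4 : ∀ j, x ^ (j + 1) * a ^ (n + 2 + j) = a ^ (n + 1) := by
    intro j
    induction j with
    | zero => simpa using h2
    | succ j ih =>
      have hstep : x * a ^ (n + 2 + (j + 1)) = a ^ (n + 2 + j) := by
        have := hxa (j + 1)
        rwa [show n + 1 + (j + 1) = n + 2 + j from by omega] at this
      rw [pow_succ x (j + 1), mul_assoc, hstep, ih]
  have F4' : x ^ (n + 2) * a ^ (n + 2 + (n + 1)) = a ^ (n + 1) := F4 (n + 1)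
  -- F5 : a^(j+1) * x^(j+1) = a * x
  have F5 : ∀ j, a ^ (j + 1) * x ^ (j + 1) = a * x := by
    intro j
    induction j with
    | zero => simp
    | succ j ih =>
      have hx2 : x ^ (j + 2) = x * x * x ^ j := by
        rw [pow_succ' x (j + 1), pow_succ' x j, ← mul_assoc]
      rw [pow_succ a (j + 1), hx2]
      calc a ^ (j + 1) * a * (x * x * x ^ j)
          = a ^ (j + 1) * (a * (x * x)) * x ^ j := by simp only [mul_assoc]
        _ = a ^ (j + 1) * x ^ (j + 1) := by rw [h1', mul_assoc, ← pow_succ']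
        _ = a * x := ih
  have F5' : a ^ (n + 2) * x ^ (n + 2) = a * x := F5 (n + 1)
  -- F6a : a * x^(j+2) = x^(j+1)
  have F6a : ∀ j, a * x ^ (j + 2) = x ^ (j + 1) := by
    intro j
    have hx2 : x ^ (j + 2) = x * x * x ^ j := by
      rw [pow_succ' x (j + 1), pow_succ' x j, ← mul_assoc]
    rw [hx2, ← mul_assoc, h1', ← pow_succ']
  have F6an : a * x ^ (n + 2) = x ^ (n + 1) := F6a n
  have F6an1 : a * x ^ (n + 3) = x ^ (n + 2) := F6a (n + 1)
  -- the Drazin inverse candidate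
  obtain ⟨d, hd⟩ : ∃ d : R, d = x ^ (n + 2) * a ^ (n + 1) := ⟨_, rfl⟩
  have had : a * d = x ^ (n + 1) * a ^ (n + 1) := by
    rw [hd, ← mul_assoc, F6an]
  have hda : d * a = x ^ (n + 1) * a ^ (n + 1) := by
    rw [hd, mul_assoc, ← pow_succ, pow_succ x (n + 1), mul_assoc, h2]
  have hcomm_ad : a * d = d * a := by rw [had, hda]
  have hdd : d * d = x ^ (n + 3) * a ^ (n + 1) := by
    rw [hd]
    calc x ^ (n + 2) * a ^ (n + 1) * (x ^ (n + 2) * a ^ (n + 1))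
        = x ^ (n + 2) * (a ^ (n + 1) * x ^ (n + 2)) * a ^ (n + 1) := by
          simp only [mul_assoc]
      _ = x ^ (n + 2) * x * a ^ (n + 1) := by rw [F1n1]
      _ = x ^ (n + 3) * a ^ (n + 1) := by rw [← pow_succ]
  have had2 : a * (d * d) = d := by
    rw [hdd, ← mul_assoc, F6an1, ← hd]
  have hdad : d * a * d = d := by
    rw [hda, hd]
    calc x ^ (n + 1) * a ^ (n + 1) * (x ^ (n + 2) * a ^ (n + 1))
        = x ^ (n + 1) * (a ^ (n + 1) * x ^ (n + 2)) * a ^ (n + 1) := by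
          simp only [mul_assoc]
      _ = x ^ (n + 1) * x * a ^ (n + 1) := by rw [F1n1]
      _ = x ^ (n + 2) * a ^ (n + 1) := by rw [← pow_succ]
  obtain ⟨e, he⟩ : ∃ e : R, e = a * d := ⟨_, rfl⟩
  have heda : e = d * a := by rw [he, hcomm_ad]
  have he_idem : e * e = e := by
    rw [he]
    calc a * d * (a * d) = a * (d * a * d) := by simp only [mul_assoc]
      _ = a * d := by rw [hdad]
  have hed : e * d = d := by rw [he, mul_assoc, had2]
  have hde : d * e = d := by rw [he, ← mul_assoc, hdad]
  have hea : e * a = a * e := by rw [he, mul_assoc, ← hcomm_ad, ← he]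
  have hcea : Commute e a := hea
  have hcad : Commute a d := hcomm_ad
  have hepow : ∀ j, e ^ (j + 1) = e := by
    intro j
    induction j with
    | zero => simp
    | succ j ih => rw [pow_succ, ih, he_idem]
  have hAD : ∀ j, a ^ (j + 1) * d ^ (j + 1) = e := by
    intro j
    rw [← hcad.mul_pow, ← he, hepow]
  have hDA : ∀ j, d ^ (j + 1) * a ^ (j + 1) = e := by
    intro j
    rw [← (hcad.symm.mul_pow), ← heda, hepow]
  have hAD2 : a ^ (n + 2) * d ^ (n + 2) = e := hAD (n + 1)
  have hDA2 : d ^ (n + 2) * a ^ (n + 2) = e := hDA (n + 1)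
  have hADn : a ^ (n + 1) * d ^ (n + 1) = e := hAD n
  -- F11 : a^(n+2) * e = a^(n+2)
  have F11 : a ^ (n + 2) * e = a ^ (n + 2) := by
    calc a ^ (n + 2) * e = a ^ (n + 2) * (x ^ (n + 2) * a ^ (n + 1) * a) := by
          rw [heda, hd]
      _ = a ^ (n + 2) * x ^ (n + 2) * (a ^ (n + 1) * a) := by simp only [mul_assoc]
      _ = a * x * a ^ (n + 2) := by rw [F5', ← pow_succ]
      _ = a * (x * a ^ (n + 2)) := by rw [mul_assoc]
      _ = a * a ^ (n + 1) := by rw [h2]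
      _ = a ^ (n + 2) := by rw [← pow_succ']
  -- F12 : e * a^(n+2) = a^(n+2)
  have F12 : e * a ^ (n + 2) = a ^ (n + 2) := by
    calc e * a ^ (n + 2) = a * (x ^ (n + 2) * a ^ (n + 1)) * a ^ (n + 2) := by
          rw [he, hd]
      _ = a * (x ^ (n + 2) * (a ^ (n + 1) * a ^ (n + 2))) := by simp only [mul_assoc]
      _ = a * (x ^ (n + 2) * a ^ (n + 2 + (n + 1))) := by
          rw [← pow_add, show n + 1 + (n + 2) = n + 2 + (n + 1) from by omega]
      _ = a * a ^ (n + 1) := by rw [F4']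
      _ = a ^ (n + 2) := by rw [← pow_succ']
  -- F14 : e * x = x
  have F14 : e * x = x := by
    calc e * x = e * (a ^ (n + 2) * x ^ (n + 3)) := by rw [F1n2]
      _ = e * a ^ (n + 2) * x ^ (n + 3) := by rw [← mul_assoc]
      _ = a ^ (n + 2) * x ^ (n + 3) := by rw [F12]
      _ = x := F1n2
  -- commutation of c with powers
  have hcca : Commute c a := hca
  have hccs : Commute c (star a) := hcs
  have hcap : ∀ j, c * a ^ j = a ^ j * c := fun j => (hcca.pow_right j).eq
  have hcsp : ∀ j, c * star (a ^ j) = star (a ^ j) * c := by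
    intro j
    rw [star_pow]
    exact (hccs.pow_right j).eq
  -- F18 : e * c = c * e
  have F18 : e * c = c * e := by
    have h5 : e * c * e = e * c := by
      calc e * c * e = d ^ (n + 2) * a ^ (n + 2) * c * e := by rw [hDA2]
        _ = d ^ (n + 2) * (a ^ (n + 2) * c * e) := by simp only [mul_assoc]
        _ = d ^ (n + 2) * (c * a ^ (n + 2) * e) := by rw [← hcap (n + 2)]
        _ = d ^ (n + 2) * (c * a ^ (n + 2)) := by rw [mul_assoc c, F11]
        _ = d ^ (n + 2) * (a ^ (n + 2) * c) := by rw [hcap (n + 2)]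
        _ = d ^ (n + 2) * a ^ (n + 2) * c := by rw [mul_assoc]
        _ = e * c := by rw [hDA2]
    have h6 : e * (c * e) = c * e := by
      calc e * (c * e) = e * (c * (a ^ (n + 2) * d ^ (n + 2))) := by rw [hAD2]
        _ = e * (a ^ (n + 2) * (c * d ^ (n + 2))) := by
            rw [← mul_assoc c, hcap (n + 2), mul_assoc]
        _ = e * a ^ (n + 2) * (c * d ^ (n + 2)) := by rw [← mul_assoc]
        _ = a ^ (n + 2) * (c * d ^ (n + 2)) := by rw [F12]
        _ = c * (a ^ (n + 2) * d ^ (n + 2)) := by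
            rw [← mul_assoc, ← hcap (n + 2), mul_assoc]
        _ = c * e := by rw [hAD2]
    rw [← h6, ← mul_assoc, h5]
  -- F19 : c * d = d * c
  have F19 : c * d = d * c := by
    calc c * d = c * (e * d) := by rw [hed]
      _ = c * e * d := by rw [← mul_assoc]
      _ = e * c * d := by rw [← F18]
      _ = d * a * c * d := by rw [heda]
      _ = d * (a * c) * d := by rw [mul_assoc d a c]
      _ = d * (c * a) * d := by rw [← hca]
      _ = d * c * (a * d) := by simp only [mul_assoc]
      _ = d * c * e := by rw [← he]
      _ = d * (c * e) := by rw [mul_assoc]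
      _ = d * (e * c) := by rw [← F18]
      _ = d * e * c := by rw [← mul_assoc]
      _ = d * c := by rw [hde]
  -- the deviation w and v
  obtain ⟨w, hw⟩ : ∃ w : R, w = x - d := ⟨_, rfl⟩
  obtain ⟨v, hv⟩ : ∃ v : R, v = a ^ (m + 1) * w := ⟨_, rfl⟩
  have hew : e * w = w := by
    rw [hw, mul_sub, F14, hed]
  have hceam : e * a ^ (m + 1) = a ^ (m + 1) * e := (hcea.pow_right (m + 1)).eq
  have hev : e * v = v := by
    rw [hv, ← mul_assoc, hceam, mul_assoc, hew]
  have hamd : a ^ (m + 1) * d = a ^ m * e := by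
    rw [pow_succ, mul_assoc, ← he]
  have hstarv : star (a ^ (n + 1)) * v
      = star (a ^ (n + 1)) * a ^ m - star (a ^ (n + 1)) * a ^ m * e := by
    rw [hv, hw, mul_sub, mul_sub, ← mul_assoc, ← mul_assoc, h3,
      mul_assoc (star (a ^ (n + 1))) (a ^ (m + 1)) d, hamd,
      ← mul_assoc]
  -- F22
  have F22 : star (a ^ (n + 1)) * (c * v) = star (a ^ (n + 1)) * (v * c) := by
    have hB : c * (star (a ^ (n + 1)) * a ^ m) = star (a ^ (n + 1)) * a ^ m * c := by
      rw [← mul_assoc, hcsp, mul_assoc, hcap, ← mul_assoc]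
    calc star (a ^ (n + 1)) * (c * v)
        = c * (star (a ^ (n + 1)) * v) := by
          rw [← mul_assoc, ← hcsp, mul_assoc]
      _ = c * (star (a ^ (n + 1)) * a ^ m) - c * (star (a ^ (n + 1)) * a ^ m) * e := by
          rw [hstarv, mul_sub, ← mul_assoc c (star (a ^ (n + 1)) * a ^ m) e]
      _ = star (a ^ (n + 1)) * a ^ m * c - star (a ^ (n + 1)) * a ^ m * c * e := by
          rw [hB]
      _ = star (a ^ (n + 1)) * a ^ m * c - star (a ^ (n + 1)) * a ^ m * e * c := by
          rw [mul_assoc (star (a ^ (n + 1)) * a ^ m) c e, ← F18,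
            ← mul_assoc]
      _ = (star (a ^ (n + 1)) * a ^ m - star (a ^ (n + 1)) * a ^ m * e) * c := by
          rw [sub_mul]
      _ = star (a ^ (n + 1)) * (v * c) := by rw [← hstarv, mul_assoc]
  -- u = 0 via properness
  obtain ⟨u, hu⟩ : ∃ u : R, u = c * v - v * c := ⟨_, rfl⟩
  have heu : e * u = u := by
    rw [hu, mul_sub, ← mul_assoc e c v, ← mul_assoc e v c, F18, mul_assoc c e v, hev]
  have hsu : star (a ^ (n + 1)) * u = 0 := by
    rw [hu, mul_sub, F22, sub_self]
  have hu0 : u = 0 := by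
    have h5 : a ^ (n + 1) * (d ^ (n + 1) * u) = u := by
      rw [← mul_assoc, hADn, heu]
    have h6 : star (a ^ (n + 1) * (d ^ (n + 1) * u))
        * (a ^ (n + 1) * (d ^ (n + 1) * u)) = 0 := by
      rw [star_mul, h5, mul_assoc, hsu, mul_zero]
    have h7 := hproper _ h6
    rw [h5] at h7
    exact h7
  have F25 : c * v = v * c := by
    have := sub_eq_zero.mp (hu ▸ hu0)
    exact this
  have hDAm : d ^ (m + 1) * a ^ (m + 1) = e := hDA m
  have hdv : d ^ (m + 1) * v = w := by
    rw [hv, ← mul_assoc, hDAm, hew]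
  have hcd : Commute c d := F19
  have hcdm : c * d ^ (m + 1) = d ^ (m + 1) * c := (hcd.pow_right (m + 1)).eq
  have F27 : c * w = w * c := by
    calc c * w = c * (d ^ (m + 1) * v) := by rw [hdv]
      _ = d ^ (m + 1) * c * v := by rw [← mul_assoc, hcdm]
      _ = d ^ (m + 1) * (v * c) := by rw [mul_assoc, F25]
      _ = w * c := by rw [← mul_assoc, hdv]
  have hxwd : x = w + d := by rw [hw, sub_add_cancel]
  rw [hxwd, mul_add, add_mul, F27, F19]

end KeyLemma

theorem mwgi_mul {R : Type*} [Ring R] [StarRing R]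
    (hproper : ∀ x : R, star x * x = 0 → x = 0)
    (m : ℕ) (hm : 0 < m) (a b x y : R)
    (hx : IsMWGI m a x) (hy : IsMWGI m b y)
    (hab : a * b = b * a) (hsab : star a * b = b * star a) :
    x * y = y * x ∧ IsMWGI m (a * b) (x * y) := by
  obtain ⟨hx1, kx, hx2, hx3⟩ := hx
  obtain ⟨hy1, ky, hy2, hy3⟩ := hy
  -- derived commutation relations among a, b, star a, star b
  have hba : b * a = a * b := hab.symm
  have hbsa : b * star a = star a * b := hsab.symm
  have hsba : star b * a = a * star b := by
    have := congrArg star hsab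
    rwa [star_mul, star_mul, star_star] at this
  have hsbsa : star b * star a = star a * star b := by
    have := congrArg star hab
    rwa [star_mul, star_mul] at this
  -- bumped axioms for x (index kx+1) and y (index ky+1)
  have hx2' : x * a ^ (kx + 1 + 1) = a ^ (kx + 1) := mwgi_bump2 hx2 1
  have hx3' : star (a ^ (kx + 1)) * a ^ (m + 1) * x = star (a ^ (kx + 1)) * a ^ m :=
    mwgi_bump3 hx3 1
  have hy2' : y * b ^ (ky + 1 + 1) = b ^ (ky + 1) := mwgi_bump2 hy2 1
  have hy3' : star (b ^ (ky + 1)) * b ^ (m + 1) * y = star (b ^ (ky + 1)) * b ^ m :=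
    mwgi_bump3 hy3 1
  -- commutation of x with b, star b; y with a, star a; x with y
  have hbx : b * x = x * b := mwgi_comm hproper m kx a x b hx1 hx2' hx3' hba hbsa
  have hsbx : star b * x = x * star b :=
    mwgi_comm hproper m kx a x (star b) hx1 hx2' hx3' hsba hsbsa
  have hay : a * y = y * a := mwgi_comm hproper m ky b y a hy1 hy2' hy3' hab hsba.symm
  have hsay : star a * y = y * star a :=
    mwgi_comm hproper m ky b y (star a) hy1 hy2' hy3' hsab hsbsa.symm
  have hxy : x * y = y * x :=
    mwgi_comm hproper m ky b y x hy1 hy2' hy3' hbx.symm hsbx.symm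
  refine ⟨hxy, ?_, kx + ky + 1, ?_, ?_⟩
  · -- (a*b) * (x*y)^2 = x*y
    have cxy : Commute x y := hxy
    have cbx : Commute b x := hbx
    have hp : (x * y) ^ 2 = x ^ 2 * y ^ 2 := cxy.mul_pow 2
    have hbx2 : Commute b (x ^ 2) := cbx.pow_right 2
    calc a * b * (x * y) ^ 2 = a * b * (x ^ 2 * y ^ 2) := by rw [hp]
      _ = a * x ^ 2 * (b * y ^ 2) := hbx2.mul_mul_mul_comm a (y ^ 2)
      _ = x * y := by rw [hx1, hy1]
  · -- (x*y) * (a*b)^(K+1) = (a*b)^K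
    have cab : Commute a b := hab
    have hxK : x * a ^ (kx + ky + 1 + 1) = a ^ (kx + ky + 1) := mwgi_bump2 hx2 (ky + 1)
    have hyK : y * b ^ (kx + ky + 1 + 1) = b ^ (kx + ky + 1) := by
      have := mwgi_bump2 hy2 (kx + 1)
      rwa [show ky + (kx + 1) = kx + ky + 1 from by omega] at this
    have cya : Commute y (a ^ (kx + ky + 1 + 1)) :=
      (Commute.symm (hay : Commute a y)).pow_right _
    calc x * y * (a * b) ^ (kx + ky + 1 + 1)
        = x * y * (a ^ (kx + ky + 1 + 1) * b ^ (kx + ky + 1 + 1)) := by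
          rw [cab.mul_pow]
      _ = x * a ^ (kx + ky + 1 + 1) * (y * b ^ (kx + ky + 1 + 1)) :=
          cya.mul_mul_mul_comm x (b ^ (kx + ky + 1 + 1))
      _ = a ^ (kx + ky + 1) * b ^ (kx + ky + 1) := by rw [hxK, hyK]
      _ = (a * b) ^ (kx + ky + 1) := (cab.mul_pow _).symm
  · -- the star condition for a*b
    have cab : Commute a b := hab
    have hx3K : star (a ^ (kx + ky + 1)) * a ^ (m + 1) * x
        = star (a ^ (kx + ky + 1)) * a ^ m := mwgi_bump3 hx3 (ky + 1)
    have hy3K : star (b ^ (kx + ky + 1)) * b ^ (m + 1) * y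
        = star (b ^ (kx + ky + 1)) * b ^ m := by
      have := mwgi_bump3 hy3 (kx + 1)
      rwa [show ky + (kx + 1) = kx + ky + 1 from by omega] at this
    -- abbreviations
    have hx3r : star (a ^ (kx + ky + 1)) * (a ^ (m + 1) * x)
        = star (a ^ (kx + ky + 1)) * a ^ m := by rw [← mul_assoc]; exact hx3K
    have hy3r : star (b ^ (kx + ky + 1)) * (b ^ (m + 1) * y)
        = star (b ^ (kx + ky + 1)) * b ^ m := by rw [← mul_assoc]; exact hy3K
    have cbx0 : Commute b x := hbx
    have csbsa0 : Commute (star b) (star a) := hsbsa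
    have csba0 : Commute (star b) a := hsba
    have cBx : Commute (b ^ (m + 1)) x := cbx0.pow_left _
    have cSbSa : Commute (star (b ^ (kx + ky + 1))) (star (a ^ (kx + ky + 1))) := by
      rw [star_pow, star_pow]
      exact csbsa0.pow_pow _ _
    have cSba : Commute (star (b ^ (kx + ky + 1))) (a ^ m) := by
      rw [star_pow]
      exact csba0.pow_pow _ _
    have cSbB : Commute (star (b ^ (kx + ky + 1))) (star (a ^ (kx + ky + 1)) * a ^ m) :=
      cSbSa.mul_right cSba
    calc star ((a * b) ^ (kx + ky + 1)) * (a * b) ^ (m + 1) * (x * y)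
        = star (b ^ (kx + ky + 1)) * star (a ^ (kx + ky + 1))
            * (a ^ (m + 1) * b ^ (m + 1)) * (x * y) := by
          rw [cab.mul_pow, cab.mul_pow, star_mul]
      _ = star (b ^ (kx + ky + 1)) * star (a ^ (kx + ky + 1))
            * (a ^ (m + 1) * b ^ (m + 1) * (x * y)) := by
          rw [mul_assoc]
      _ = star (b ^ (kx + ky + 1)) * star (a ^ (kx + ky + 1))
            * (a ^ (m + 1) * x * (b ^ (m + 1) * y)) := by
          rw [cBx.mul_mul_mul_comm (a ^ (m + 1)) y]
      _ = star (b ^ (kx + ky + 1)) * (star (a ^ (kx + ky + 1)) * (a ^ (m + 1) * x)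
            * (b ^ (m + 1) * y)) := by
          simp only [mul_assoc]
      _ = star (b ^ (kx + ky + 1)) * (star (a ^ (kx + ky + 1)) * a ^ m
            * (b ^ (m + 1) * y)) := by
          rw [hx3r]
      _ = star (a ^ (kx + ky + 1)) * a ^ m
            * (star (b ^ (kx + ky + 1)) * (b ^ (m + 1) * y)) := by
          rw [← mul_assoc, cSbB.eq, mul_assoc]
      _ = star (a ^ (kx + ky + 1)) * a ^ m * (star (b ^ (kx + ky + 1)) * b ^ m) := by
          rw [hy3r]
      _ = star (b ^ (kx + ky + 1)) * (star (a ^ (kx + ky + 1)) * a ^ m) * b ^ m := by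
          rw [← mul_assoc, ← cSbB.eq]
      _ = star ((a * b) ^ (kx + ky + 1)) * (a * b) ^ m := by
          rw [cab.mul_pow, cab.mul_pow, star_mul]
          simp only [mul_assoc]
end

section
/- Let R be a ring with proper involution and let m be a positive integer. An element a ∈ R has an m-weak group inverse if and only if a has a Drazin inverse d and there exist x ∈ R and n ∈ ℕ such that a x^2 = x, ((a^m)^* a^(m+1) x)^* = (a^m)^* a^(m+1) x, and a^n = a x a^n. In this case, a d x is an m-weak group inverse of a (where x satisfies the preceding three conditions). -/
section Aux

variable {R : Type*} [Ring R]

/-- From `a z² = z` we get `aʲ z^{j+1} = z`. -/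
private lemma mwgi_lemL1 {a z : R} (h : a * z ^ 2 = z) : ∀ j : ℕ, a ^ j * z ^ (j + 1) = z := by
  intro j
  induction j with
  | zero => simp
  | succ n ih =>
    have e1 : z ^ (n + 1 + 1) = z ^ 2 * z ^ n := by rw [← pow_add]; ring_nf
    calc a ^ (n + 1) * z ^ (n + 1 + 1)
        = a ^ n * (a * z ^ 2) * z ^ n := by rw [pow_succ, e1]; simp [mul_assoc]
      _ = a ^ n * z ^ (n + 1) := by rw [h, pow_succ']; simp [mul_assoc]
      _ = z := ih

/-- From `a z² = z` we get `a z^{j+2} = z^{j+1}`. -/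
private lemma mwgi_lemAZ {a z : R} (h : a * z ^ 2 = z) (j : ℕ) :
    a * z ^ (j + 2) = z ^ (j + 1) := by
  have e1 : z ^ (j + 2) = z ^ 2 * z ^ j := by rw [← pow_add]; ring_nf
  rw [e1, ← mul_assoc, h, ← pow_succ']

/-- From `z a^{k+1} = aᵏ` we get `z a^{k+1+j} = a^{k+j}`. -/
private lemma mwgi_lemZA {a z : R} {k : ℕ} (h : z * a ^ (k + 1) = a ^ k) (j : ℕ) :
    z * a ^ (k + 1 + j) = a ^ (k + j) := by
  rw [pow_add, ← mul_assoc, h, ← pow_add]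

/-- From `z a^{k+1} = aᵏ` we get `zʲ a^{k+j} = aᵏ`. -/
private lemma mwgi_lemZAj {a z : R} {k : ℕ} (h : z * a ^ (k + 1) = a ^ k) : ∀ j : ℕ,
    z ^ j * a ^ (k + j) = a ^ k := by
  intro j
  induction j with
  | zero => simp
  | succ n ih =>
    have e1 : z * a ^ (k + (n + 1)) = a ^ (k + n) := by
      have := mwgi_lemZA h n; rw [show k + 1 + n = k + (n + 1) by omega] at this; exact this
    calc z ^ (n + 1) * a ^ (k + (n + 1))
        = z ^ n * (z * a ^ (k + (n + 1))) := by rw [pow_succ, mul_assoc]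
      _ = z ^ n * a ^ (k + n) := by rw [e1]
      _ = a ^ k := ih

/-- Second half: under the stated hypotheses, `a d x` is an `m`-weak group inverse of `a`. -/
private lemma mwgi_part2 {R : Type*} [Ring R] [StarRing R] (m : ℕ) (a d x : R) (n : ℕ)
    (hd : IsDrazin a d) (hx1 : a * x ^ 2 = x)
    (hx2 : star (star (a ^ m) * a ^ (m + 1) * x) = star (a ^ m) * a ^ (m + 1) * x)
    (hx3 : a ^ n = a * x * a ^ n) : IsMWGI m a (a * d * x) := by
  obtain ⟨hd1, hd2, k, hdk⟩ := hd
  have hcomm : ∀ j : ℕ, a ^ j * d = d * a ^ j := fun j =>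
    ((Commute.pow_left (hd2 : Commute a d) j)).eq
  have he : ∀ j : ℕ, a * d * a ^ (k + j) = a ^ (k + j) := by
    intro j
    calc a * d * a ^ (k + j) = a * (d * a ^ (k + j)) := by rw [mul_assoc]
      _ = a * (a ^ (k + j) * d) := by rw [hcomm]
      _ = a ^ (k + j + 1) * d := by rw [← mul_assoc, ← pow_succ']
      _ = d * a ^ (k + j + 1) := by rw [hcomm]
      _ = d * (a ^ (k + 1) * a ^ j) := by rw [← pow_add]; ring_nf
      _ = d * a ^ (k + 1) * a ^ j := by rw [mul_assoc]
      _ = a ^ k * a ^ j := by rw [← hdk]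
      _ = a ^ (k + j) := by rw [← pow_add]
  have h0 : a * d * a ^ k = a ^ k := by simpa using he 0
  have hex : a * d * x = x := by
    have h1 : a ^ k * x ^ (k + 1) = x := mwgi_lemL1 hx1 k
    calc a * d * x = a * d * (a ^ k * x ^ (k + 1)) := by rw [h1]
      _ = (a * d * a ^ k) * x ^ (k + 1) := by noncomm_ring
      _ = a ^ k * x ^ (k + 1) := by rw [h0]
      _ = x := h1
  rw [hex]
  have hee : (a * d) * (a * d) = a * d := by
    calc (a * d) * (a * d) = a * (d * a) * d := by noncomm_ring
      _ = a * (a * d) * d := by rw [← hd2]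
      _ = a * (a * d ^ 2) := by noncomm_ring
      _ = a * d := by rw [hd1]
  have hepow : ∀ j : ℕ, (a * d) ^ (j + 1) = a * d := by
    intro j
    induction j with
    | zero => simp
    | succ p ih => rw [pow_succ, ih, hee]
  have hen : a ^ (n + 1) * d ^ (n + 1) = a * d := by
    rw [← Commute.mul_pow (hd2 : Commute a d), hepow]
  have haxe : a * x * (a * d) = a * d := by
    calc a * x * (a * d) = a * x * (a ^ (n + 1) * d ^ (n + 1)) := by rw [hen]
      _ = (a * x * a ^ n) * (a * d ^ (n + 1)) := by rw [pow_succ]; noncomm_ring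
      _ = a ^ n * (a * d ^ (n + 1)) := by rw [← hx3]
      _ = a ^ (n + 1) * d ^ (n + 1) := by rw [pow_succ]; noncomm_ring
      _ = a * d := hen
  have hxe : x * (a * d) = d := by
    calc x * (a * d) = (a * d * x) * (a * d) := by rw [hex]
      _ = (d * a) * (x * (a * d)) := by rw [← hd2]; noncomm_ring
      _ = d * (a * x * (a * d)) := by noncomm_ring
      _ = d * (a * d) := by rw [haxe]
      _ = a * d ^ 2 := by rw [← mul_assoc, ← hd2]; noncomm_ring
      _ = d := hd1
  refine ⟨hx1, m + k, ?_, ?_⟩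
  · have h1 : a * d * a ^ (m + k + 1) = a ^ (m + k + 1) := by
      have := he (m + 1); rw [show k + (m + 1) = m + k + 1 by omega] at this; exact this
    calc x * a ^ (m + k + 1) = x * (a * d * a ^ (m + k + 1)) := by rw [h1]
      _ = (x * (a * d)) * a ^ (m + k + 1) := by noncomm_ring
      _ = d * a ^ (m + k + 1) := by rw [hxe]
      _ = d * (a ^ (k + 1) * a ^ m) := by rw [← pow_add]; ring_nf
      _ = (d * a ^ (k + 1)) * a ^ m := by rw [mul_assoc]
      _ = a ^ k * a ^ m := by rw [← hdk]
      _ = a ^ (m + k) := by rw [← pow_add]; ring_nf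
  · set q : R := a ^ (m + 1) * x - a ^ m with hq
    have hqe : q * (a * d) = 0 := by
      have step : a ^ (m + 1) * (x * (a * d)) = a ^ m * (a * d) := by
        rw [hxe, pow_succ, mul_assoc]
      rw [hq, sub_mul, mul_assoc, step, sub_self]
    have hqak : q * a ^ k = 0 := by
      calc q * a ^ k = q * (a * d * a ^ k) := by rw [h0]
        _ = (q * (a * d)) * a ^ k := by noncomm_ring
        _ = 0 := by rw [hqe, zero_mul]
    have hsym : star q * a ^ m = star (a ^ m) * q := by
      have expand : star (a ^ m) * a ^ (m + 1) * x = star (a ^ m) * q + star (a ^ m) * a ^ m := by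
        rw [hq]; noncomm_ring
      have expandL : star (star (a ^ m) * a ^ (m + 1) * x)
          = star q * a ^ m + star (a ^ m) * a ^ m := by
        rw [hq]
        simp only [star_sub, star_mul, star_star]
        noncomm_ring
      have h2 := hx2
      rw [expandL, expand] at h2
      exact add_right_cancel h2
    have hfinal : star q * a ^ (m + k) = 0 := by
      calc star q * a ^ (m + k) = (star q * a ^ m) * a ^ k := by
            rw [mul_assoc, ← pow_add]
        _ = star (a ^ m) * q * a ^ k := by rw [hsym]
        _ = star (a ^ m) * (q * a ^ k) := by rw [mul_assoc]
        _ = 0 := by rw [hqak, mul_zero]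
    have hstar : star (a ^ (m + k)) * q = 0 := by
      have := congrArg star hfinal
      simpa [star_mul] using this
    rw [hq, mul_sub] at hstar
    rw [mul_assoc]
    exact sub_eq_zero.mp hstar

/-- Forward direction: an `m`-weak group inverse yields a Drazin inverse and a witness `x`. -/
private lemma mwgi_part1 {R : Type*} [Ring R] [StarRing R] (m : ℕ) (a z : R)
    (hz : IsMWGI m a z) :
    ∃ d : R, IsDrazin a d ∧ ∃ x : R, ∃ n : ℕ,
      a * x ^ 2 = x ∧
      star (star (a ^ m) * a ^ (m + 1) * x) = star (a ^ m) * a ^ (m + 1) * x ∧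
      a ^ n = a * x * a ^ n := by
  obtain ⟨haz, k, hz1, hz2⟩ := hz
  set K := k + 1 with hK
  have hz1' : z * a ^ (K + 1) = a ^ K := by
    calc z * a ^ (K + 1) = z * (a ^ (k + 1) * a) := by rw [← pow_succ]
      _ = (z * a ^ (k + 1)) * a := by rw [mul_assoc]
      _ = a ^ k * a := by rw [hz1]
      _ = a ^ K := by rw [← pow_succ]
  refine ⟨z ^ (K + 1) * a ^ K, ?_, z, K + 1, haz, ?_, ?_⟩
  · -- Drazin
    have had : a * (z ^ (K + 1) * a ^ K) = z ^ K * a ^ K := by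
      rw [← mul_assoc, show K + 1 = k + 2 from rfl, mwgi_lemAZ haz k]
    have hda : (z ^ (K + 1) * a ^ K) * a = z ^ K * a ^ K := by
      calc (z ^ (K + 1) * a ^ K) * a = z ^ (K + 1) * a ^ (K + 1) := by
            rw [mul_assoc, ← pow_succ]
        _ = (z ^ K * z) * a ^ (K + 1) := by rw [← pow_succ]
        _ = z ^ K * (z * a ^ (K + 1)) := by rw [mul_assoc]
        _ = z ^ K * a ^ K := by rw [hz1']
    refine ⟨?_, by rw [had, hda], K, ?_⟩
    · -- a d² = d
      calc a * (z ^ (K + 1) * a ^ K) ^ 2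
          = (a * (z ^ (K + 1) * a ^ K)) * (z ^ (K + 1) * a ^ K) := by rw [sq, ← mul_assoc]
        _ = (z ^ K * a ^ K) * (z ^ (K + 1) * a ^ K) := by rw [had]
        _ = z ^ K * (a ^ K * z ^ (K + 1)) * a ^ K := by noncomm_ring
        _ = z ^ K * z * a ^ K := by rw [mwgi_lemL1 haz K]
        _ = z ^ (K + 1) * a ^ K := by rw [← pow_succ]
    · -- a^K = d a^{K+1}
      calc a ^ K = z ^ (K + 1) * a ^ (K + (K + 1)) := (mwgi_lemZAj hz1' (K + 1)).symm
        _ = z ^ (K + 1) * (a ^ K * a ^ (K + 1)) := by rw [← pow_add]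
        _ = z ^ (K + 1) * a ^ K * a ^ (K + 1) := by rw [mul_assoc]
  · -- star symmetry for x = z
    have hL1 : a ^ k * z ^ (k + 1) = z := mwgi_lemL1 haz k
    set s : R := a ^ (m + 1) * z ^ (k + 1) with hs
    have hh : a ^ (m + 1) * z = a ^ k * s := by
      calc a ^ (m + 1) * z = a ^ (m + 1) * (a ^ k * z ^ (k + 1)) := by rw [hL1]
        _ = (a ^ (m + 1) * a ^ k) * z ^ (k + 1) := by rw [mul_assoc]
        _ = (a ^ k * a ^ (m + 1)) * z ^ (k + 1) := by rw [← pow_add, ← pow_add]; ring_nf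
        _ = a ^ k * s := by rw [hs, mul_assoc]
    have hz2' : star (a ^ k) * (a ^ (m + 1) * z) = star (a ^ k) * a ^ m := by
      rw [← mul_assoc]; exact hz2
    have key1 : star (a ^ (m + 1) * z) * (a ^ (m + 1) * z)
        = star (a ^ (m + 1) * z) * a ^ m := by
      calc star (a ^ (m + 1) * z) * (a ^ (m + 1) * z)
          = star (a ^ k * s) * (a ^ (m + 1) * z) := by rw [← hh]
        _ = star s * (star (a ^ k) * (a ^ (m + 1) * z)) := by
            simp [star_mul, mul_assoc]
        _ = star s * (star (a ^ k) * a ^ m) := by rw [hz2']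
        _ = star (a ^ k * s) * a ^ m := by simp [star_mul, mul_assoc]
        _ = star (a ^ (m + 1) * z) * a ^ m := by rw [← hh]
    have key2 : star (a ^ m) * (a ^ (m + 1) * z) = star (a ^ (m + 1) * z) * a ^ m := by
      calc star (a ^ m) * (a ^ (m + 1) * z)
          = star (star (a ^ (m + 1) * z) * a ^ m) := by simp [star_mul]
        _ = star (star (a ^ (m + 1) * z) * (a ^ (m + 1) * z)) := by rw [key1]
        _ = star (a ^ (m + 1) * z) * (a ^ (m + 1) * z) := by simp [star_mul]
        _ = star (a ^ (m + 1) * z) * a ^ m := key1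
    calc star (star (a ^ m) * a ^ (m + 1) * z)
        = star (star (a ^ m) * (a ^ (m + 1) * z)) := by rw [mul_assoc]
      _ = star (a ^ (m + 1) * z) * a ^ m := by simp [star_mul, mul_assoc]
      _ = star (a ^ m) * (a ^ (m + 1) * z) := key2.symm
      _ = star (a ^ m) * a ^ (m + 1) * z := by rw [mul_assoc]
  · -- a^{K+1} = a z a^{K+1}
    calc a ^ (K + 1) = a * a ^ K := by rw [pow_succ']
      _ = a * (z * a ^ (K + 1)) := by rw [hz1']
      _ = a * z * a ^ (K + 1) := by rw [mul_assoc]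

end Aux

theorem mwgi_iff_drazin_symm {R : Type*} [Ring R] [StarRing R]
    (hproper : ∀ x : R, star x * x = 0 → x = 0)
    (m : ℕ) (hm : 0 < m) (a : R) :
    ((∃ z : R, IsMWGI m a z) ↔
      ∃ d : R, IsDrazin a d ∧ ∃ x : R, ∃ n : ℕ,
        a * x ^ 2 = x ∧
        star (star (a ^ m) * a ^ (m + 1) * x) = star (a ^ m) * a ^ (m + 1) * x ∧
        a ^ n = a * x * a ^ n) ∧
      ∀ d x : R, ∀ n : ℕ, IsDrazin a d →
        a * x ^ 2 = x →
        star (star (a ^ m) * a ^ (m + 1) * x) = star (a ^ m) * a ^ (m + 1) * x →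
        a ^ n = a * x * a ^ n →
        IsMWGI m a (a * d * x) := by
  constructor
  · constructor
    · rintro ⟨z, hz⟩
      exact mwgi_part1 m a z hz
    · rintro ⟨d, hd, x, n, h1, h2, h3⟩
      exact ⟨a * d * x, mwgi_part2 m a d x n hd h1 h2 h3⟩
  · intro d x n hd h1 h2 h3
    exact mwgi_part2 m a d x n hd h1 h2 h3
end

section
/- Let R be a ring with proper involution and let m be a positive integer. An element a ∈ R has an m-weak group inverse if and only if a has a Drazin inverse d and there exists an idempotent p ∈ R (p^2 = p) such that a + p is right invertible, d^* a^m p = 0, and d R = (1 - p) R (i.e. d = (1 - p) u and 1 - p = d v for some u, v ∈ R). In this case, d (1 - p) is an m-weak group inverse of a. -/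
private lemma helper_mwgi {R : Type*} [Ring R] [StarRing R] (m : ℕ) (a d p : R)
    (hd : IsDrazin a d) (hp : p ^ 2 = p)
    (hstar : star d * a ^ m * p = 0)
    (hu : ∃ u : R, d = (1 - p) * u) (hv : ∃ v : R, 1 - p = d * v) :
    IsMWGI m a (d * (1 - p)) := by
  obtain ⟨had2, hcomm, k, hk⟩ := hd
  obtain ⟨u, hu⟩ := hu
  obtain ⟨v, hv⟩ := hv
  have hpd : p * d = 0 := by
    have h0 : p * (1 - p) = 0 := by
      rw [mul_sub, mul_one, ← pow_two, hp, sub_self]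
    rw [hu, ← mul_assoc, h0, zero_mul]
  have h1pd : (1 - p) * d = d := by
    rw [sub_mul, one_mul, hpd, sub_zero]
  have hdd : a * d * d = d := by
    have : a * d ^ 2 = a * d * d := by rw [pow_two, mul_assoc]
    rw [← this, had2]
  -- p * a^(k+1) = 0
  have hak1 : a ^ (k + 1) = a * d * a ^ (k + 1) := by
    calc a ^ (k + 1) = a * a ^ k := by rw [pow_succ']
    _ = a * (d * a ^ (k + 1)) := by rw [← hk]
    _ = a * d * a ^ (k + 1) := by rw [mul_assoc]
  have hpak : p * a ^ (k + 1) = 0 := by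
    calc p * a ^ (k + 1) = p * (a * d * a ^ (k + 1)) := by rw [← hak1]
    _ = p * (d * a * a ^ (k + 1)) := by rw [hcomm]
    _ = p * d * (a * a ^ (k + 1)) := by noncomm_ring
    _ = 0 := by rw [hpd, zero_mul]
  have key : a * (d * (1 - p)) = 1 - p := by
    calc a * (d * (1 - p)) = a * (d * (d * v)) := by rw [← hv]
    _ = a * d * d * v := by noncomm_ring
    _ = d * v := by rw [hdd]
    _ = 1 - p := hv.symm
  refine ⟨?_, k, ?_, ?_⟩
  · calc a * (d * (1 - p)) ^ 2 = a * (d * ((1 - p) * d) * (1 - p)) := by noncomm_ring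
    _ = a * (d * d * (1 - p)) := by rw [h1pd]
    _ = a * d * d * (1 - p) := by noncomm_ring
    _ = d * (1 - p) := by rw [hdd]
  · calc d * (1 - p) * a ^ (k + 1) = d * a ^ (k + 1) - d * (p * a ^ (k + 1)) := by noncomm_ring
    _ = a ^ k - d * 0 := by rw [← hk, hpak]
    _ = a ^ k := by rw [mul_zero, sub_zero]
  · have hsk : star (a ^ k) * a ^ m * p = 0 := by
      calc star (a ^ k) * a ^ m * p = star (d * a ^ (k + 1)) * a ^ m * p := by rw [← hk]
      _ = star (a ^ (k + 1)) * (star d * a ^ m * p) := by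
          rw [star_mul]; noncomm_ring
      _ = 0 := by rw [hstar, mul_zero]
    calc star (a ^ k) * a ^ (m + 1) * (d * (1 - p))
        = star (a ^ k) * a ^ m * (a * (d * (1 - p))) := by
          rw [pow_succ]; noncomm_ring
    _ = star (a ^ k) * a ^ m * (1 - p) := by rw [key]
    _ = star (a ^ k) * a ^ m - star (a ^ k) * a ^ m * p := by noncomm_ring
    _ = star (a ^ k) * a ^ m := by rw [hsk, sub_zero]

private lemma forward_mwgi {R : Type*} [Ring R] [StarRing R] (m : ℕ) (a z : R) (K' : ℕ)
    (h1 : a * z ^ 2 = z)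
    (h2 : z * a ^ (K' + 2 + 1) = a ^ (K' + 2))
    (h3 : star (a ^ (K' + 2)) * a ^ (m + 1) * z = star (a ^ (K' + 2)) * a ^ m) :
    ∃ d : R, IsDrazin a d ∧ ∃ p : R, p ^ 2 = p ∧
      (∃ s : R, (a + p) * s = 1) ∧
      star d * a ^ m * p = 0 ∧
      (∃ u : R, d = (1 - p) * u) ∧ (∃ v : R, 1 - p = d * v) := by
  set K := K' + 2 with hKdef
  -- basic power identities
  have hz_pow : ∀ j : ℕ, a * z ^ (j + 2) = z ^ (j + 1) := by
    intro j
    calc a * z ^ (j + 2) = a * (z ^ 2 * z ^ j) := by rw [pow_add, pow_mul_comm]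
    _ = (a * z ^ 2) * z ^ j := by rw [mul_assoc]
    _ = z * z ^ j := by rw [h1]
    _ = z ^ (j + 1) := (pow_succ' z j).symm
  have hza : ∀ j : ℕ, z ^ j * a ^ (K + j) = a ^ K := by
    intro j
    induction j with
    | zero => simp
    | succ j ih =>
      calc z ^ (j + 1) * a ^ (K + (j + 1))
          = (z ^ j * z) * (a ^ (K + 1) * a ^ j) := by
            rw [pow_succ, ← pow_add, show K + (j + 1) = K + 1 + j by omega]
      _ = z ^ j * (z * a ^ (K + 1)) * a ^ j := by noncomm_ring
      _ = z ^ j * a ^ K * a ^ j := by rw [h2]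
      _ = z ^ j * a ^ (K + j) := by rw [mul_assoc, ← pow_add]
      _ = a ^ K := ih
  have hzz : ∀ j : ℕ, a ^ j * z ^ (j + 1) = z := by
    intro j
    induction j with
    | zero => simp
    | succ j ih =>
      calc a ^ (j + 1) * z ^ (j + 2) = a ^ j * (a * z ^ (j + 2)) := by
            rw [pow_succ, mul_assoc]
      _ = a ^ j * z ^ (j + 1) := by rw [hz_pow]
      _ = z := ih
  set e := z ^ K * a ^ K with hedef
  set d := z ^ (K + 1) * a ^ K with hddef
  have hKza : a ^ K * z ^ (K + 1) = z := hzz K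
  have he0 : z ^ (K + 1) * a ^ (K + 1) = e := by
    calc z ^ (K + 1) * a ^ (K + 1) = z ^ K * (z * a ^ (K + 1)) := by
          rw [pow_succ, mul_assoc]
    _ = z ^ K * a ^ K := by rw [h2]
  have haKe : a ^ K * e = a ^ K := by
    calc a ^ K * e = a ^ K * (z ^ (K + 1) * a ^ (K + 1)) := by rw [he0]
    _ = (a ^ K * z ^ (K + 1)) * a ^ (K + 1) := by rw [mul_assoc]
    _ = z * a ^ (K + 1) := by rw [hKza]
    _ = a ^ K := h2
  have hee : e * e = e := by
    calc e * e = z ^ K * (a ^ K * e) := by rw [hedef, mul_assoc]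
    _ = z ^ K * a ^ K := by rw [haKe]
  have had : a * d = e := by
    calc a * d = (a * z ^ (K + 1)) * a ^ K := by rw [hddef, ← mul_assoc]
    _ = z ^ K * a ^ K := by
        rw [show (K : ℕ) + 1 = K' + 1 + 2 by omega, hz_pow, show K' + 1 + 1 = K by omega]
  have hda : d * a = e := by
    calc d * a = z ^ (K + 1) * (a ^ K * a) := by rw [mul_assoc]
    _ = z ^ (K + 1) * a ^ (K + 1) := by rw [← pow_succ]
    _ = e := he0
  have hze : z * e = d := by
    calc z * e = (z * z ^ K) * a ^ K := by rw [hedef, ← mul_assoc]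
    _ = d := by rw [← pow_succ']
  have hed : e * d = d := by
    calc e * d = z ^ K * ((a ^ K * z ^ (K + 1)) * a ^ K) := by
          rw [hedef, hddef]; noncomm_ring
    _ = z ^ K * (z * a ^ K) := by rw [hKza]
    _ = (z ^ K * z) * a ^ K := by rw [mul_assoc]
    _ = d := by rw [← pow_succ]
  have hadd2 : a * d ^ 2 = d := by
    calc a * d ^ 2 = (a * d) * d := by rw [pow_two, ← mul_assoc]
    _ = e * d := by rw [had]
    _ = d := hed
  have hdcomm : a * d = d * a := by rw [had, hda]
  have hdaK : d * a ^ (K + 1) = a ^ K := by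
    calc d * a ^ (K + 1) = z ^ (K + 1) * a ^ (K + (K + 1)) := by
          rw [mul_assoc, ← pow_add]
    _ = a ^ K := hza (K + 1)
  have hDrazin : IsDrazin a d := ⟨hadd2, hdcomm, K, hdaK.symm⟩
  -- commutation of e with a
  have hea : e * a = z ^ (K' + 1) * a ^ K := by
    calc e * a = z ^ K * (a ^ K * a) := by rw [hedef, mul_assoc]
    _ = (z ^ (K' + 1) * z) * a ^ (K + 1) := by
        rw [← pow_succ, show (K : ℕ) = K' + 1 + 1 by omega, pow_succ]
    _ = z ^ (K' + 1) * (z * a ^ (K + 1)) := by rw [mul_assoc]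
    _ = z ^ (K' + 1) * a ^ K := by rw [h2]
  have hae : a * e = z ^ (K' + 1) * a ^ K := by
    calc a * e = (a * z ^ K) * a ^ K := by rw [hedef, ← mul_assoc]
    _ = z ^ (K' + 1) * a ^ K := by rw [show (K : ℕ) = K' + 2 by omega, hz_pow]
  have heA : e * a = a * e := by rw [hea, hae]
  have heaz : e * (a * z) = a * z := by
    have hakz : a ^ K * z = a ^ (K + K) * z ^ (K + 1) := by
      calc a ^ K * z = a ^ K * (a ^ K * z ^ (K + 1)) := by rw [hKza]
      _ = a ^ (K + K) * z ^ (K + 1) := by rw [← mul_assoc, ← pow_add]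
    calc e * (a * z) = (e * a) * z := (mul_assoc e a z).symm
    _ = z ^ (K' + 1) * (a ^ K * z) := by rw [hea, mul_assoc]
    _ = z ^ (K' + 1) * (a ^ (K + K) * z ^ (K + 1)) := by rw [hakz]
    _ = (z ^ (K' + 1) * a ^ (K + (K' + 1))) * (a * z ^ (K + 1)) := by
        rw [show K + K = K + (K' + 1) + 1 by omega, pow_succ]; noncomm_ring
    _ = a ^ K * (a * z ^ (K + 1)) := by rw [hza (K' + 1)]
    _ = a ^ (K + 1) * z ^ (K + 1) := by rw [← mul_assoc, ← pow_succ]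
    _ = a * (a ^ K * z ^ (K + 1)) := by rw [pow_succ', mul_assoc]
    _ = a * z := by rw [hKza]
  have hzaz : z * (a * z) = z := by
    calc z * (a * z) = z * (a * (a ^ K * z ^ (K + 1))) := by rw [hKza]
    _ = (z * a ^ (K + 1)) * z ^ (K + 1) := by
        rw [show a * (a ^ K * z ^ (K + 1)) = a ^ (K + 1) * z ^ (K + 1) by
          rw [← mul_assoc, ← pow_succ'], ← mul_assoc]
    _ = a ^ K * z ^ (K + 1) := by rw [h2]
    _ = z := hKza
  have hazaz : (a * z) * (a * z) = a * z := by
    calc (a * z) * (a * z) = a * (z * (a * z)) := by noncomm_ring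
    _ = a * z := by rw [hzaz]
  have hazd : (a * z) * d = d := by
    calc (a * z) * d = (a * (z * z ^ (K + 1))) * a ^ K := by rw [hddef]; noncomm_ring
    _ = (a * z ^ (K + 2)) * a ^ K := by rw [← pow_succ']
    _ = z ^ (K + 1) * a ^ K := by rw [hz_pow]
  have haze : (a * z) * e = e := by
    calc (a * z) * e = a * (z * e) := by rw [mul_assoc]
    _ = a * d := by rw [hze]
    _ = e := had
  -- the nilpotent part
  set n := a - a * e with hndef
  have hne : n * e = 0 := by
    calc n * e = a * e - a * (e * e) := by rw [hndef]; noncomm_ring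
    _ = 0 := by rw [hee, sub_self]
  have hen : e * n = 0 := by
    calc e * n = e * a - (e * a) * e := by rw [hndef]; noncomm_ring
    _ = a * e - a * (e * e) := by rw [heA, mul_assoc]
    _ = 0 := by rw [hee, sub_self]
  have hnaz : n * (a * z) = 0 := by
    calc n * (a * z) = a * (a * z) - a * (e * (a * z)) := by rw [hndef]; noncomm_ring
    _ = 0 := by rw [heaz, sub_self]
  have hnu0 : ∀ j : ℕ, n ^ (j + 1) = a ^ (j + 1) - a ^ (j + 1) * e := by
    intro j
    induction j with
    | zero => simpa using hndef
    | succ j ih =>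
      have expand : n ^ (j + 2) = n ^ (j + 1) * n := by rw [← pow_succ]
      rw [expand, ih, hndef]
      have t1 : a ^ (j + 1) * e * a = a ^ (j + 2) * e := by
        rw [mul_assoc, heA, ← mul_assoc, ← pow_succ]
      have t2 : a ^ (j + 1) * e * (a * e) = a ^ (j + 2) * e := by
        calc a ^ (j + 1) * e * (a * e) = (a ^ (j + 1) * (e * a)) * e := by noncomm_ring
        _ = (a ^ (j + 1) * (a * e)) * e := by rw [heA]
        _ = ((a ^ (j + 1) * a) * e) * e := by rw [← mul_assoc (a ^ (j + 1)) a e]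
        _ = a ^ (j + 2) * (e * e) := by rw [← pow_succ, mul_assoc (a ^ (j + 2)) e e]
        _ = a ^ (j + 2) * e := by rw [hee]
      calc (a ^ (j + 1) - a ^ (j + 1) * e) * (a - a * e)
          = a ^ (j + 1) * a - a ^ (j + 1) * (a * e) - a ^ (j + 1) * e * a
            + a ^ (j + 1) * e * (a * e) := by noncomm_ring
      _ = a ^ (j + 2) - a ^ (j + 2) * e - a ^ (j + 2) * e + a ^ (j + 2) * e := by
          rw [t1, t2, ← pow_succ, ← mul_assoc, ← pow_succ]
      _ = a ^ (j + 2) - a ^ (j + 2) * e := by abel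
  have hnK : n ^ K = 0 := by
    have := hnu0 (K' + 1)
    rw [show K' + 1 + 1 = K by omega] at this
    rw [this, haKe, sub_self]
  -- geometric series
  set g := ∑ i ∈ Finset.range K, (-n) ^ i with hgdef
  have hcng : Commute n g := by
    apply Commute.sum_right
    intro i _
    exact ((Commute.refl n).neg_right).pow_right i
  have hg1 : g * (1 + n) = 1 := by
    have := geom_sum_mul (-n) K
    have hneg : (-n) ^ K = 0 := by
      rw [neg_pow, hnK, mul_zero]
    rw [hneg, zero_sub] at this
    calc g * (1 + n) = -(g * (-n - 1)) := by noncomm_ring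
    _ = -(-1) := by rw [this]
    _ = 1 := neg_neg 1
  have h1g : (1 + n) * g = 1 := by
    have hc : (1 + n) * g = g * (1 + n) := by
      have : Commute (1 + n) g := (Commute.one_left g).add_left hcng
      exact this.eq
    rw [hc, hg1]
  have heg : e * g = e := by
    calc e * g = (e * (1 + n)) * g := by rw [mul_add, mul_one, hen, add_zero]
    _ = e * ((1 + n) * g) := by rw [mul_assoc]
    _ = e := by rw [h1g, mul_one]
  have hge : g * e = e := by
    calc g * e = g * ((1 + n) * e) := by rw [add_mul, one_mul, hne, add_zero]
    _ = (g * (1 + n)) * e := by rw [mul_assoc]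
    _ = e := by rw [hg1, one_mul]
  set s := d + g - e with hsdef
  have hde2 : d * e = d := by
    calc d * e = d * (a * d) := by rw [had]
    _ = (d * a) * d := (mul_assoc d a d).symm
    _ = e * d := by rw [hda]
    _ = d := hed
  have hL2 : (a + 1 - e) * s = 1 := by
    have key : g + a * g - a * e = 1 := by
      calc g + a * g - a * e = g + a * g - a * (e * g) := by rw [heg]
      _ = (1 + n) * g := by rw [hndef]; noncomm_ring
      _ = 1 := h1g
    calc (a + 1 - e) * s
        = (a * d + d - e * d) + (a * g + g - e * g) - (a * e + e - e * e) := by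
          rw [hsdef]; noncomm_ring
    _ = (e + d - d) + (a * g + g - e) - (a * e + e - e) := by rw [had, hed, heg, hee]
    _ = g + a * g - a * e := by abel
    _ = 1 := key
  have hL1 : s * (a + 1 - e) = 1 := by
    have hgae : g * (a * e) = a * e := by
      calc g * (a * e) = g * (e * a) := by rw [heA]
      _ = (g * e) * a := (mul_assoc g e a).symm
      _ = e * a := by rw [hge]
      _ = a * e := heA
    have key : g + g * a - a * e = 1 := by
      calc g + g * a - a * e = g + g * a - g * (a * e) := by rw [hgae]
      _ = g * (1 + n) := by rw [hndef]; noncomm_ring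
      _ = 1 := hg1
    calc s * (a + 1 - e)
        = (d * a + d - d * e) + (g * a + g - g * e) - (e * a + e - e * e) := by
          rw [hsdef]; noncomm_ring
    _ = (e + d - d) + (g * a + g - e) - (a * e + e - e) := by
        rw [hda, hde2, hge, hee, heA]
    _ = g + g * a - a * e := by abel
    _ = 1 := key
  -- the square-zero element u
  set u := e - a * z with hudef
  have hud : u * d = 0 := by
    calc u * d = e * d - (a * z) * d := by rw [hudef, sub_mul]
    _ = d - d := by rw [hed, hazd]
    _ = 0 := sub_self d
  have hue : u * e = 0 := by
    calc u * e = e * e - (a * z) * e := by rw [hudef, sub_mul]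
    _ = e - e := by rw [hee, haze]
    _ = 0 := sub_self e
  have huu : u * u = 0 := by
    calc u * u = (e * e - e * (a * z)) - ((a * z) * e - (a * z) * (a * z)) := by
          rw [hudef]; noncomm_ring
    _ = (e - (a * z)) - (e - (a * z)) := by rw [hee, heaz, haze, hazaz]
    _ = 0 := sub_self _
  have hnu : n * u = 0 := by
    calc n * u = n * e - n * (a * z) := by rw [hudef, mul_sub]
    _ = 0 := by rw [hne, hnaz, sub_self]
  have hgu : g * u = u := by
    rw [hgdef, Finset.sum_mul]
    rw [Finset.sum_eq_single 0]
    · simp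
    · intro b _ hb
      obtain ⟨j, rfl⟩ : ∃ j, b = j + 1 := ⟨b - 1, by omega⟩
      have : n ^ (j + 1) * u = 0 := by
        calc n ^ (j + 1) * u = n ^ j * (n * u) := by rw [pow_succ, mul_assoc]
        _ = 0 := by rw [hnu, mul_zero]
      calc (-n) ^ (j + 1) * u = ((-1 : R) ^ (j + 1) * n ^ (j + 1)) * u := by rw [neg_pow]
      _ = (-1 : R) ^ (j + 1) * (n ^ (j + 1) * u) := by rw [mul_assoc]
      _ = 0 := by rw [this, mul_zero]
    · intro h
      exact absurd (Finset.mem_range.mpr (by omega)) h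
  have hus : u * s = u * g := by
    calc u * s = u * d + u * g - u * e := by rw [hsdef]; noncomm_ring
    _ = u * g := by rw [hud, hue]; abel
  have husq : (u * s) * (u * s) = 0 := by
    calc (u * s) * (u * s) = (u * g) * (u * g) := by rw [hus]
    _ = u * (g * u) * g := by noncomm_ring
    _ = (u * u) * g := by rw [hgu]
    _ = 0 := by rw [huu, zero_mul]
  -- the right inverse of a + 1 - a*z
  set r := s * (1 - u * s) with hrdef
  have hfact : a + 1 - a * z = (1 + u * s) * (a + 1 - e) := by
    calc (a + 1 - a * z) = (a + 1 - e) + u := by rw [hudef]; abel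
    _ = (a + 1 - e) + u * (s * (a + 1 - e)) := by rw [hL1, mul_one]
    _ = (1 + u * s) * (a + 1 - e) := by noncomm_ring
  have hrinv : (a + (1 - a * z)) * r = 1 := by
    have e1 : a + (1 - a * z) = a + 1 - a * z := by abel
    calc (a + (1 - a * z)) * r = ((1 + u * s) * (a + 1 - e)) * (s * (1 - u * s)) := by
          rw [e1, hfact, hrdef]
    _ = (1 + u * s) * ((a + 1 - e) * s) * (1 - u * s) := by noncomm_ring
    _ = (1 + u * s) * (1 - u * s) := by rw [hL2, mul_one]
    _ = 1 + u * s - u * s - (u * s) * (u * s) := by noncomm_ring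
    _ = 1 := by rw [husq]; abel
  -- assemble
  refine ⟨d, hDrazin, 1 - a * z, ?_, ⟨r, hrinv⟩, ?_, ⟨d, ?_⟩, ⟨a * (a * z), ?_⟩⟩
  · calc (1 - a * z) ^ 2 = 1 - a * z - a * z + (a * z) * (a * z) := by noncomm_ring
    _ = 1 - a * z := by rw [hazaz]; abel
  · -- star d * a^m * (1 - a*z) = 0
    have hdK : ∀ j : ℕ, d = a ^ j * d ^ (j + 1) := by
      intro j
      induction j with
      | zero => simp
      | succ j ih =>
        have step : a * d ^ (j + 2) = d ^ (j + 1) := by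
          calc a * d ^ (j + 2) = (a * d ^ 2) * d ^ j := by
                rw [show d ^ (j + 2) = d ^ 2 * d ^ j by rw [pow_add, pow_mul_comm],
                  mul_assoc]
          _ = d * d ^ j := by rw [hadd2]
          _ = d ^ (j + 1) := (pow_succ' d j).symm
        calc d = a ^ j * d ^ (j + 1) := ih
        _ = a ^ j * (a * d ^ (j + 2)) := by rw [step]
        _ = a ^ (j + 1) * d ^ (j + 2) := by rw [← mul_assoc, ← pow_succ]
    have h3' : star (a ^ K) * a ^ m * (1 - a * z) = 0 := by
      have : star (a ^ K) * a ^ m * (a * z) = star (a ^ K) * a ^ m := by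
        calc star (a ^ K) * a ^ m * (a * z) = star (a ^ K) * a ^ (m + 1) * z := by
              rw [pow_succ]; noncomm_ring
        _ = star (a ^ K) * a ^ m := h3
      rw [mul_sub, mul_one, this, sub_self]
    calc star d * a ^ m * (1 - a * z)
        = star (a ^ K * d ^ (K + 1)) * a ^ m * (1 - a * z) := by rw [← hdK K]
    _ = star (d ^ (K + 1)) * (star (a ^ K) * a ^ m * (1 - a * z)) := by
        rw [star_mul]; noncomm_ring
    _ = 0 := by rw [h3', mul_zero]
  · -- d = (1 - (1 - a*z)) * d
    rw [sub_sub_cancel, hazd]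
  · -- 1 - (1 - a*z) = d * (a * (a * z))
    rw [sub_sub_cancel]
    calc a * z = e * (a * z) := heaz.symm
    _ = (d * a) * (a * z) := by rw [hda]
    _ = d * (a * (a * z)) := by rw [mul_assoc]

theorem mwgi_iff_polar_like {R : Type*} [Ring R] [StarRing R]
    (hproper : ∀ x : R, star x * x = 0 → x = 0)
    (m : ℕ) (hm : 0 < m) (a : R) :
    ((∃ z : R, IsMWGI m a z) ↔
      ∃ d : R, IsDrazin a d ∧ ∃ p : R, p ^ 2 = p ∧
        (∃ s : R, (a + p) * s = 1) ∧
        star d * a ^ m * p = 0 ∧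
        (∃ u : R, d = (1 - p) * u) ∧ (∃ v : R, 1 - p = d * v)) ∧
      ∀ d p : R, IsDrazin a d → p ^ 2 = p →
        (∃ s : R, (a + p) * s = 1) →
        star d * a ^ m * p = 0 →
        (∃ u : R, d = (1 - p) * u) → (∃ v : R, 1 - p = d * v) →
        IsMWGI m a (d * (1 - p)) := by
  constructor
  · constructor
    · rintro ⟨z, hz1, k, hz2, hz3⟩
      have h2' : z * a ^ (k + 2 + 1) = a ^ (k + 2) := by
        calc z * a ^ (k + 2 + 1) = (z * a ^ (k + 1)) * a ^ 2 := by
              rw [show k + 2 + 1 = (k + 1) + 2 by omega, pow_add, ← mul_assoc]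
        _ = a ^ k * a ^ 2 := by rw [hz2]
        _ = a ^ (k + 2) := by rw [← pow_add]
      have hstar2 : star (a ^ (k + 2)) = star (a ^ 2) * star (a ^ k) := by
        rw [pow_add, star_mul]
      have h3' : star (a ^ (k + 2)) * a ^ (m + 1) * z = star (a ^ (k + 2)) * a ^ m := by
        rw [hstar2]
        calc star (a ^ 2) * star (a ^ k) * a ^ (m + 1) * z
            = star (a ^ 2) * (star (a ^ k) * a ^ (m + 1) * z) := by noncomm_ring
        _ = star (a ^ 2) * (star (a ^ k) * a ^ m) := by rw [hz3]
        _ = star (a ^ 2) * star (a ^ k) * a ^ m := by rw [mul_assoc]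
      exact forward_mwgi m a z k hz1 h2' h3'
    · rintro ⟨d, hd, p, hp, hs, hstar, hu, hv⟩
      exact ⟨d * (1 - p), helper_mwgi m a d p hd hp hstar hu hv⟩
  · intro d p hd hp _hs hstar hu hv
    exact helper_mwgi m a d p hd hp hstar hu hv
end

section
/- Let R be a ring with proper involution. An element a ∈ R has a weak group inverse if and only if a has a Drazin inverse d and there exists an idempotent p ∈ R (p^2 = p) such that a + p is right invertible, d^* a p = 0, and d R = (1 - p) R (i.e. d = (1 - p) u and 1 - p = d v for some u, v ∈ R). In this case, d (1 - p) is a weak group inverse of a. -/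
section Aux

variable {R : Type*} [Ring R]

/-- `a * w^(j+2) = w^(j+1)` from `a * w^2 = w`. -/
lemma aux_aw2 (a w : R) (h : a * w ^ 2 = w) : ∀ j : ℕ, a * w ^ (j + 2) = w ^ (j + 1) := by
  intro j
  induction j with
  | zero => simpa using h
  | succ j ih =>
    have s : w ^ (j + 3) = w ^ (j + 2) * w := pow_succ w (j + 2)
    have s2 : w ^ (j + 1) * w = w ^ (j + 2) := (pow_succ w (j + 1)).symm
    have goal : a * w ^ (j + 1 + 2) = w ^ (j + 1 + 1) := by
      show a * w ^ (j + 3) = w ^ (j + 2)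
      rw [s, ← mul_assoc, ih, s2]
    exact goal

/-- `a^j * w^(j+1) = w` from `a * w^2 = w`. -/
lemma aux_pw (a w : R) (h : a * w ^ 2 = w) : ∀ j : ℕ, a ^ j * w ^ (j + 1) = w := by
  intro j
  induction j with
  | zero => simp
  | succ j ih =>
    have s : a * w ^ (j + 1 + 1) = w ^ (j + 1) := aux_aw2 a w h j
    rw [pow_succ, mul_assoc, s, ih]

/-- `w^j * a^(K+j) = a^K` from `a^K = w * a^(K+1)`. -/
lemma aux_wak (a w : R) (K : ℕ) (hK : a ^ K = w * a ^ (K + 1)) :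
    ∀ j : ℕ, w ^ j * a ^ (K + j) = a ^ K := by
  intro j
  induction j with
  | zero => simp
  | succ j ih =>
    have s1 : a ^ (K + (j + 1)) = a ^ (K + 1) * a ^ j := by
      have : K + (j + 1) = (K + 1) + j := by omega
      rw [this, pow_add]
    calc w ^ (j + 1) * a ^ (K + (j + 1)) = (w ^ j * w) * (a ^ (K + 1) * a ^ j) := by
          rw [pow_succ, s1]
      _ = w ^ j * ((w * a ^ (K + 1)) * a ^ j) := by noncomm_ring
      _ = w ^ j * (a ^ K * a ^ j) := by rw [← hK]
      _ = w ^ j * a ^ (K + j) := by rw [← pow_add]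
      _ = a ^ K := ih

/-- geometric-series style solver: if `a^n * c = 0` then `(1+a) X = c` is solvable. -/
lemma aux_nil_geom (a q : R) (hqa : a * q = q * a) :
    ∀ (n : ℕ) (c : R), a ^ n * c = 0 → q * c = c → a * c = c * a →
      ∃ X, a * X + X = c ∧ q * X = X := by
  intro n
  induction n with
  | zero =>
    intro c h0 _ _
    have hc : c = 0 := by simpa using h0
    exact ⟨0, by simp [hc], by simp⟩
  | succ n ih =>
    intro c h0 hqc hca
    have hac0 : a ^ n * (a * c) = 0 := by rw [← mul_assoc, ← pow_succ]; exact h0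
    have hqac : q * (a * c) = a * c := by rw [← mul_assoc, ← hqa, mul_assoc, hqc]
    have hcac : a * (a * c) = (a * c) * a := by rw [hca, ← mul_assoc, hca]
    obtain ⟨X, h1, h2⟩ := ih (a * c) hac0 hqac hcac
    refine ⟨c - X, ?_, ?_⟩
    · have e : a * (c - X) + (c - X) = (a * c - (a * X + X)) + c := by noncomm_ring
      rw [e, h1]; noncomm_ring
    · rw [mul_sub, hqc, h2]

/-- right invertibility of `a + p`. -/
lemma aux_rinv (a d p : R) (had2 : a * d ^ 2 = d) (hcomm : a * d = d * a) (k : ℕ)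
    (hak : a ^ k = d * a ^ (k + 1)) (hpd : p * d = 0) (v : R) (hv : 1 - p = d * v) :
    ∃ s, (a + p) * s = 1 := by
  have hqa : a * (1 - a * d) = (1 - a * d) * a := by
    calc a * (1 - a * d) = a - a * (a * d) := by noncomm_ring
      _ = a - a * (d * a) := by rw [hcomm]
      _ = (1 - a * d) * a := by noncomm_ring
  have hqq : (1 - a * d) * (1 - a * d) = 1 - a * d := by
    calc (1 - a * d) * (1 - a * d) = 1 - a * d - a * d + a * ((d * a) * d) := by noncomm_ring
      _ = 1 - a * d - a * d + a * ((a * d) * d) := by rw [hcomm]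
      _ = 1 - a * d - a * d + a * (a * d ^ 2) := by noncomm_ring
      _ = 1 - a * d := by rw [had2]; noncomm_ring
  have hdpow : ∀ n : ℕ, a ^ n * d = d * a ^ n := by
    intro n
    induction n with
    | zero => simp
    | succ n ih => rw [pow_succ, mul_assoc, hcomm, ← mul_assoc, ih, mul_assoc]
  have hkq : a ^ (k + 1) * (1 - a * d) = 0 := by
    calc a ^ (k + 1) * (1 - a * d) = a ^ (k + 1) - (a ^ (k + 1) * a) * d := by noncomm_ring
      _ = a ^ (k + 1) - a ^ (k + 1 + 1) * d := by rw [← pow_succ]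
      _ = a ^ (k + 1) - d * a ^ (k + 1 + 1) := by rw [hdpow]
      _ = a ^ (k + 1) - (d * a ^ (k + 1)) * a := by rw [pow_succ a (k + 1), ← mul_assoc]
      _ = a ^ (k + 1) - a ^ k * a := by rw [← hak]
      _ = 0 := by rw [← pow_succ, sub_self]
  have hadv : a * d * (d * v) = d * v := by
    calc a * d * (d * v) = (a * d ^ 2) * v := by noncomm_ring
      _ = d * v := by rw [had2]
  obtain ⟨X, hX1, hX2⟩ := aux_nil_geom a (1 - a * d) hqa (k + 1) (1 - a * d) hkq hqq hqa
  refine ⟨d + X + d * ((d * v) * X), ?_⟩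
  have f1 : a * (d * ((d * v) * X)) = (d * v) * X := by
    calc a * (d * ((d * v) * X)) = (a * d * (d * v)) * X := by noncomm_ring
      _ = (d * v) * X := by rw [hadv]
  have f2 : p * (d * ((d * v) * X)) = 0 := by rw [← mul_assoc, hpd, zero_mul]
  have f3 : a * X = (1 - a * d) - X := eq_sub_of_add_eq hX1
  have f4 : (d * v) * X = X - p * X := by rw [← hv]; noncomm_ring
  have expand : (a + p) * (d + X + d * ((d * v) * X)) =
      a * d + p * d + (a * X + p * X) + (a * (d * ((d * v) * X)) + p * (d * ((d * v) * X))) := by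
    noncomm_ring
  rw [expand, hpd, f3, f1.trans f4, f2]
  noncomm_ring

end Aux

section Star

variable {R : Type*} [Ring R] [StarRing R]

/-- backward direction: the conditions imply `d(1-p)` is a WGI of `a`. -/
lemma wgi_of_conditions (a d p : R) (had2 : a * d ^ 2 = d) (hcomm : a * d = d * a)
    (k : ℕ) (hak : a ^ k = d * a ^ (k + 1)) (hp : p ^ 2 = p)
    (hdap : star d * a * p = 0) (u : R) (hu : d = (1 - p) * u) (v : R) (hv : 1 - p = d * v) :
    IsWGI a (d * (1 - p)) := by
  have hpp : p * p = p := by rw [← pow_two]; exact hp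
  have hpe : p * (1 - p) = 0 := by rw [mul_sub, mul_one, hpp, sub_self]
  have hpd : p * d = 0 := by rw [hu, ← mul_assoc, hpe, zero_mul]
  have hed : (1 - p) * d = d := by rw [sub_mul, one_mul, hpd, sub_zero]
  have haw : a * (d * (1 - p)) = 1 - p := by
    calc a * (d * (1 - p)) = a * (d * (d * v)) := by rw [hv]
      _ = (a * d ^ 2) * v := by noncomm_ring
      _ = d * v := by rw [had2]
      _ = 1 - p := hv.symm
  refine ⟨?_, ?_, ⟨k, ?_⟩⟩
  · calc a * (d * (1 - p)) ^ 2 = a * (d * (((1 - p) * d) * (1 - p))) := by noncomm_ring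
      _ = a * (d * (d * (1 - p))) := by rw [hed]
      _ = (a * d ^ 2) * (1 - p) := by noncomm_ring
      _ = d * (1 - p) := by rw [had2]
  · have hkill : star p * (star a * d) = 0 := by
      have h := congrArg star hdap
      rw [star_zero] at h
      rw [star_mul, star_mul, star_star] at h
      exact h
    have haev : a * (1 - p) = d * (a * v) := by
      calc a * (1 - p) = a * (d * v) := by rw [hv]
        _ = (a * d) * v := by rw [← mul_assoc]
        _ = (d * a) * v := by rw [hcomm]
        _ = d * (a * v) := by rw [mul_assoc]
    have hkill2 : star p * (star a * (a * (1 - p))) = 0 := by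
      calc star p * (star a * (a * (1 - p))) = star p * (star a * (d * (a * v))) := by rw [haev]
        _ = (star p * (star a * d)) * (a * v) := by noncomm_ring
        _ = 0 := by rw [hkill, zero_mul]
    have h1p : (1 : R) - p + p = 1 := by noncomm_ring
    have hsum : star (1 - p) + star p = 1 := by rw [← star_add, h1p, star_one]
    have hT : star a * a ^ 2 * (d * (1 - p)) = star (a * (1 - p)) * (a * (1 - p)) := by
      calc star a * a ^ 2 * (d * (1 - p)) = star a * (a * (a * (d * (1 - p)))) := by noncomm_ring
        _ = star a * (a * (1 - p)) := by rw [haw]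
        _ = (star (1 - p) + star p) * (star a * (a * (1 - p))) := by rw [hsum, one_mul]
        _ = star (1 - p) * (star a * (a * (1 - p))) + star p * (star a * (a * (1 - p))) := by
            rw [add_mul]
        _ = star (1 - p) * (star a * (a * (1 - p))) := by rw [hkill2, add_zero]
        _ = star (a * (1 - p)) * (a * (1 - p)) := by rw [star_mul, mul_assoc]
    rw [hT, star_mul, star_star]
  · have h0 : p * a ^ k = 0 := by rw [hak, ← mul_assoc, hpd, zero_mul]
    have hpak : p * a ^ (k + 1) = 0 := by rw [pow_succ, ← mul_assoc, h0, zero_mul]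
    calc a ^ k = d * a ^ (k + 1) := hak
      _ = d * ((1 - p) * a ^ (k + 1)) := by rw [sub_mul, one_mul, hpak, sub_zero]
      _ = d * (1 - p) * a ^ (k + 1) := by rw [mul_assoc]

/-- forward direction. -/
lemma forward_main (a w : R) (hw : IsWGI a w) :
    ∃ d : R, IsDrazin a d ∧ ∃ p : R, p ^ 2 = p ∧
      (∃ s : R, (a + p) * s = 1) ∧
      star d * a * p = 0 ∧
      (∃ u : R, d = (1 - p) * u) ∧ (∃ v : R, 1 - p = d * v) := by
  obtain ⟨haw2, hh, k0, hk0⟩ := hw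
  have hK : a ^ (k0 + 1) = w * a ^ (k0 + 1 + 1) := by
    calc a ^ (k0 + 1) = a ^ k0 * a := pow_succ a k0
      _ = (w * a ^ (k0 + 1)) * a := by rw [hk0]
      _ = w * a ^ (k0 + 1 + 1) := by rw [mul_assoc, ← pow_succ]
  have hKc : w * a ^ (k0 + 2) = a ^ (k0 + 1) := hK.symm
  have F1b : a ^ (k0 + 1) * w ^ (k0 + 2) = w := aux_pw a w haw2 (k0 + 1)
  have F1c : a ^ (k0 + 2) * w ^ (k0 + 3) = w := aux_pw a w haw2 (k0 + 2)
  have F1d : a ^ (k0 + 3) * w ^ (k0 + 4) = w := aux_pw a w haw2 (k0 + 3)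
  have F2a : a * w ^ (k0 + 2) = w ^ (k0 + 1) := aux_aw2 a w haw2 k0
  have F2c : a * w ^ (k0 + 3) = w ^ (k0 + 2) := aux_aw2 a w haw2 (k0 + 1)
  set d := w ^ (k0 + 2) * a ^ (k0 + 1) with hd_def
  have had : a * d = w ^ (k0 + 1) * a ^ (k0 + 1) := by
    rw [hd_def, ← mul_assoc, F2a]
  have hda : d * a = w ^ (k0 + 1) * a ^ (k0 + 1) := by
    rw [hd_def, mul_assoc, ← pow_succ]
    show w ^ (k0 + 2) * a ^ (k0 + 2) = w ^ (k0 + 1) * a ^ (k0 + 1)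
    have s : w ^ (k0 + 2) = w ^ (k0 + 1) * w := pow_succ w (k0 + 1)
    rw [s, mul_assoc, hKc]
  have hcd : a * d = d * a := by rw [had, hda]
  have hws : w ^ (k0 + 1) * w = w ^ (k0 + 2) := (pow_succ w (k0 + 1)).symm
  have had2 : a * d ^ 2 = d := by
    calc a * d ^ 2 = (a * d) * d := by noncomm_ring
      _ = (w ^ (k0 + 1) * a ^ (k0 + 1)) * (w ^ (k0 + 2) * a ^ (k0 + 1)) := by rw [had, hd_def]
      _ = w ^ (k0 + 1) * (a ^ (k0 + 1) * w ^ (k0 + 2)) * a ^ (k0 + 1) := by noncomm_ring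
      _ = w ^ (k0 + 1) * w * a ^ (k0 + 1) := by rw [F1b]
      _ = w ^ (k0 + 2) * a ^ (k0 + 1) := by rw [hws]
      _ = d := hd_def.symm
  have hdak' : d * a ^ (k0 + 2) = a ^ (k0 + 1) := by
    calc d * a ^ (k0 + 2) = w ^ (k0 + 2) * (a ^ (k0 + 1) * a ^ (k0 + 2)) := by
          rw [hd_def, mul_assoc]
      _ = w ^ (k0 + 2) * a ^ (k0 + 1 + (k0 + 2)) := by rw [← pow_add]
      _ = a ^ (k0 + 1) := aux_wak a w (k0 + 1) hK (k0 + 2)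
  have hdak : a ^ (k0 + 1) = d * a ^ (k0 + 2) := hdak'.symm
  -- idempotent e = a*w
  have hsplita3 : a ^ (k0 + 3) = a * a ^ (k0 + 2) := pow_succ' a (k0 + 2)
  have hawpow : a ^ (k0 + 3) * w ^ (k0 + 3) = a * w := by
    rw [hsplita3, mul_assoc, F1c]
  have hsplita3' : a ^ (k0 + 3) = a ^ (k0 + 2) * a := pow_succ a (k0 + 2)
  have hee : (a * w) * (a * w) = a * w := by
    calc (a * w) * (a * w) = (a * w) * (a ^ (k0 + 3) * w ^ (k0 + 3)) :=
          (congrArg (fun x => (a * w) * x) hawpow).symm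
      _ = (a * (w * a ^ (k0 + 2))) * (a * w ^ (k0 + 3)) := by rw [hsplita3']; noncomm_ring
      _ = (a * a ^ (k0 + 1)) * w ^ (k0 + 2) := by rw [hKc, F2c]
      _ = a * (a ^ (k0 + 1) * w ^ (k0 + 2)) := by rw [mul_assoc]
      _ = a * w := by rw [F1b]
  have hp2 : (1 - a * w) ^ 2 = 1 - a * w := by
    calc (1 - a * w) ^ 2 = 1 - a * w - a * w + (a * w) * (a * w) := by noncomm_ring
      _ = 1 - a * w := by rw [hee]; noncomm_ring
  have hwsplit : w * w ^ (k0 + 2) = w ^ (k0 + 3) := (pow_succ' w (k0 + 2)).symm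
  have hed : (a * w) * d = d := by
    calc (a * w) * d = (a * (w * w ^ (k0 + 2))) * a ^ (k0 + 1) := by rw [hd_def]; noncomm_ring
      _ = (a * w ^ (k0 + 3)) * a ^ (k0 + 1) := by rw [hwsplit]
      _ = w ^ (k0 + 2) * a ^ (k0 + 1) := by rw [F2c]
      _ = d := hd_def.symm
  have hsplita : a ^ (k0 + 1) = a * a ^ k0 := pow_succ' a k0
  have hdv : d * (a ^ (k0 + 3) * w ^ (k0 + 2)) = a * w := by
    calc d * (a ^ (k0 + 3) * w ^ (k0 + 2)) = (d * a ^ (k0 + 2)) * (a * w ^ (k0 + 2)) := by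
          rw [hsplita3']; noncomm_ring
      _ = a ^ (k0 + 1) * (a * w ^ (k0 + 2)) := by rw [hdak']
      _ = a ^ (k0 + 1) * w ^ (k0 + 1) := by rw [F2a]
      _ = a * (a ^ k0 * w ^ (k0 + 1)) := by rw [hsplita, mul_assoc]
      _ = a * w := by rw [aux_pw a w haw2 k0]
  have hpd : (1 - a * w) * d = 0 := by rw [sub_mul, one_mul, hed, sub_self]
  -- the star condition
  have s1 : a * a ^ (k0 + 1) = a ^ (k0 + 2) := (pow_succ' a (k0 + 1)).symm
  have s2 : a * a ^ (k0 + 2) = a ^ (k0 + 3) := (pow_succ' a (k0 + 2)).symm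
  have hmerge : a ^ 2 * a ^ (k0 + 1) = a ^ (k0 + 3) := by
    rw [pow_two, mul_assoc, s1, s2]
  have e1 : (star a * a ^ 2 * w) * a ^ (k0 + 2) = star a * a ^ (k0 + 3) := by
    calc (star a * a ^ 2 * w) * a ^ (k0 + 2) = star a * (a ^ 2 * (w * a ^ (k0 + 2))) := by
          noncomm_ring
      _ = star a * (a ^ 2 * a ^ (k0 + 1)) := by rw [hKc]
      _ = star a * a ^ (k0 + 3) := by rw [hmerge]
  have e2 : star (a ^ (k0 + 2)) * (star a * a ^ 2 * w) = star (a ^ (k0 + 3)) * a := by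
    calc star (a ^ (k0 + 2)) * (star a * a ^ 2 * w)
        = star ((star a * a ^ 2 * w) * a ^ (k0 + 2)) := by rw [star_mul, hh]
      _ = star (star a * a ^ (k0 + 3)) := by rw [e1]
      _ = star (a ^ (k0 + 3)) * a := by rw [star_mul, star_star]
  have e3 : star (a ^ (k0 + 3)) * (a ^ 2 * w) = star (a ^ (k0 + 3)) * a := by
    calc star (a ^ (k0 + 3)) * (a ^ 2 * w)
        = (star (a ^ (k0 + 2)) * star a) * (a ^ 2 * w) := by rw [← star_mul, s2]
      _ = star (a ^ (k0 + 2)) * (star a * a ^ 2 * w) := by noncomm_ring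
      _ = star (a ^ (k0 + 3)) * a := e2
  have hzero : star (a ^ (k0 + 3)) * (a - a ^ 2 * w) = 0 := by
    rw [mul_sub, e3, sub_self]
  have hsw : star w = star (w ^ (k0 + 4)) * star (a ^ (k0 + 3)) := by
    rw [← star_mul, F1d]
  have hswc : star w * (a - a ^ 2 * w) = 0 := by
    calc star w * (a - a ^ 2 * w)
        = (star (w ^ (k0 + 4)) * star (a ^ (k0 + 3))) * (a - a ^ 2 * w) := by rw [hsw]
      _ = star (w ^ (k0 + 4)) * (star (a ^ (k0 + 3)) * (a - a ^ 2 * w)) := by rw [mul_assoc]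
      _ = 0 := by rw [hzero, mul_zero]
  have hap : a * (1 - a * w) = a - a ^ 2 * w := by
    rw [mul_sub, mul_one, ← mul_assoc, ← pow_two]
  have hps2 : star (w ^ (k0 + 2)) = star (w ^ (k0 + 1)) * star w := by
    rw [show w ^ (k0 + 2) = w * w ^ (k0 + 1) from pow_succ' w (k0 + 1), star_mul]
  have hsd : star d = (star (a ^ (k0 + 1)) * star (w ^ (k0 + 1))) * star w := by
    rw [hd_def, star_mul, hps2, ← mul_assoc]
  have hdap : star d * a * (1 - a * w) = 0 := by
    calc star d * a * (1 - a * w) = star d * (a - a ^ 2 * w) := by rw [mul_assoc, hap]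
      _ = (star (a ^ (k0 + 1)) * star (w ^ (k0 + 1))) * (star w * (a - a ^ 2 * w)) := by
          rw [hsd, mul_assoc]
      _ = 0 := by rw [hswc, mul_zero]
  -- assemble
  have hu : d = (1 - (1 - a * w)) * d := by rw [sub_sub_cancel]; exact hed.symm
  have hv : 1 - (1 - a * w) = d * (a ^ (k0 + 3) * w ^ (k0 + 2)) := by
    rw [sub_sub_cancel]; exact hdv.symm
  exact ⟨d, ⟨had2, hcd, k0 + 1, hdak⟩, 1 - a * w, hp2,
    aux_rinv a d (1 - a * w) had2 hcd (k0 + 1) hdak hpd (a ^ (k0 + 3) * w ^ (k0 + 2)) hv,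
    hdap, ⟨d, hu⟩, ⟨a ^ (k0 + 3) * w ^ (k0 + 2), hv⟩⟩

end Star

theorem wgi_iff_polar_like {R : Type*} [Ring R] [StarRing R]
    (hproper : ∀ x : R, star x * x = 0 → x = 0)
    (a : R) :
    ((∃ w : R, IsWGI a w) ↔
      ∃ d : R, IsDrazin a d ∧ ∃ p : R, p ^ 2 = p ∧
        (∃ s : R, (a + p) * s = 1) ∧
        star d * a * p = 0 ∧
        (∃ u : R, d = (1 - p) * u) ∧ (∃ v : R, 1 - p = d * v)) ∧
      ∀ d p : R, IsDrazin a d → p ^ 2 = p →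
        (∃ s : R, (a + p) * s = 1) →
        star d * a * p = 0 →
        (∃ u : R, d = (1 - p) * u) → (∃ v : R, 1 - p = d * v) →
        IsWGI a (d * (1 - p)) := by
  refine ⟨⟨?_, ?_⟩, ?_⟩
  · rintro ⟨w, hw⟩
    exact forward_main a w hw
  · rintro ⟨d, ⟨had2, hcomm, k, hak⟩, p, hp, _hs, hdap, ⟨u, hu⟩, ⟨v, hv⟩⟩
    exact ⟨d * (1 - p), wgi_of_conditions a d p had2 hcomm k hak hp hdap u hu v hv⟩
  · rintro d p ⟨had2, hcomm, k, hak⟩ hp _hs hdap ⟨u, hu⟩ ⟨v, hv⟩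
    exact wgi_of_conditions a d p had2 hcomm k hak hp hdap u hu v hv
end

section
/- Let R be a ring with proper involution, m a positive integer, and let y be a core-EP inverse of a ∈ R. Then a has an m-weak group inverse, and y^(m+1) a^m is an m-weak group inverse of a; that is, a^{W_m} = (a^{D̄})^(m+1) a^m. -/
theorem coreEP_gives_mwgi {R : Type*} [Ring R] [StarRing R]
    (hproper : ∀ x : R, star x * x = 0 → x = 0)
    (m : ℕ) (hm : 0 < m) (a y : R) (hy : IsCoreEP a y) :
    IsMWGI m a (y ^ (m + 1) * a ^ m) := by
  obtain ⟨h1, h2, k, h3⟩ := hy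
  have hA : ∀ n : ℕ, a ^ n * y ^ (n + 1) = y := by
    intro n
    induction n with
    | zero => simp
    | succ n ih =>
      calc a ^ (n + 1) * y ^ (n + 1 + 1)
          = a ^ n * (a * y ^ 2) * y ^ n := by
            rw [pow_succ, show n + 1 + 1 = 2 + n from by omega, pow_add]
            simp only [mul_assoc]
        _ = a ^ n * y * y ^ n := by rw [h1]
        _ = a ^ n * y ^ (n + 1) := by rw [mul_assoc, ← pow_succ']
        _ = y := ih
  have hB : ∀ n : ℕ, y ^ (n + 1) * a ^ (k + n + 1) = a ^ k := by
    intro n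
    induction n with
    | zero => simpa using h3.symm
    | succ n ih =>
      calc y ^ (n + 1 + 1) * a ^ (k + (n + 1) + 1)
          = y ^ (n + 1) * (y * a ^ (k + 1)) * a ^ (n + 1) := by
            rw [pow_succ, show k + (n + 1) + 1 = (k + 1) + (n + 1) from by omega]
            simp only [pow_add, mul_assoc]
        _ = y ^ (n + 1) * a ^ k * a ^ (n + 1) := by rw [← h3]
        _ = y ^ (n + 1) * a ^ (k + n + 1) := by rw [mul_assoc, ← pow_add, ← Nat.add_assoc]
        _ = a ^ k := ih
  have hey : a * y * y = y := by
    have h : a * (y * y) = y := by rw [← sq]; exact h1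
    rwa [← mul_assoc] at h
  have hsy : star y * (a * y) = star y := by
    calc star y * (a * y) = star y * star (a * y) := by rw [h2]
      _ = star (a * y * y) := by rw [← star_mul]
      _ = star y := by rw [hey]
  have hkey : star (a ^ k) * (a * y) = star (a ^ k) := by
    calc star (a ^ k) * (a * y) = star (y * a ^ (k + 1)) * (a * y) := by rw [← h3]
      _ = star (a ^ (k + 1)) * (star y * (a * y)) := by rw [star_mul, mul_assoc]
      _ = star (a ^ (k + 1)) * star y := by rw [hsy]
      _ = star (y * a ^ (k + 1)) := by rw [star_mul]
      _ = star (a ^ k) := by rw [← h3]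
  refine ⟨?_, k, ?_, ?_⟩
  · calc a * (y ^ (m + 1) * a ^ m) ^ 2
        = a * y ^ (m + 1) * (a ^ m * y ^ (m + 1)) * a ^ m := by
          rw [sq]; simp only [mul_assoc]
      _ = a * y ^ (m + 1) * y * a ^ m := by rw [hA m]
      _ = a * y ^ (m + 1 + 1) * a ^ m := by rw [mul_assoc a (y ^ (m + 1)) y, ← pow_succ]
      _ = a * y ^ 2 * y ^ m * a ^ m := by
          rw [show m + 1 + 1 = 2 + m from by omega, pow_add]
          simp only [mul_assoc]
      _ = y * y ^ m * a ^ m := by rw [h1]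
      _ = y ^ (m + 1) * a ^ m := by rw [← pow_succ']
  · calc y ^ (m + 1) * a ^ m * a ^ (k + 1)
        = y ^ (m + 1) * a ^ (k + m + 1) := by
          rw [mul_assoc, ← pow_add, show m + (k + 1) = k + m + 1 from by omega]
      _ = a ^ k := hB m
  · calc star (a ^ k) * a ^ (m + 1) * (y ^ (m + 1) * a ^ m)
        = star (a ^ k) * (a * (a ^ m * y ^ (m + 1))) * a ^ m := by
          rw [pow_succ']; simp only [mul_assoc]
      _ = star (a ^ k) * (a * y) * a ^ m := by rw [hA m]
      _ = star (a ^ k) * a ^ m := by rw [hkey]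
end
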